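/- arXiv:2403.18763 — 3 statements merged into one kernel-verified Lean document; each statement's English description precedes it below -/
import Mathlib

section
/- For all integers r, s ≥ 0 and n ≥ 1, the product in the ring Wₙ(L) of truncated Witt vectors satisfies fil^log_r Wₙ(L) · fil^log_s Wₙ(L) ⊆ fil^log_{r+s} Wₙ(L). In particular (taking s = 0), fil^log_r Wₙ(L) is a Wₙ(O)-submodule of Wₙ(L). -/
noncomputable section

open scoped Classical

/-- A discretely valued field: a field `L` together with a normalized additive valuation
`v : L → ℤ ∪ {∞}` and a uniformizer `z` (so `v z = 1`).  The valuation ring is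
`O = {a : L | 0 ≤ v a}`, with maximal ideal `𝔪 = {a : L | 1 ≤ v a}`. -/
structure DVField (L : Type) [Field L] : Type where
  v : L → WithTop ℤ
  z : L
  v_top : ∀ a : L, v a = ⊤ ↔ a = 0
  v_mul : ∀ a b : L, v (a * b) = v a + v b
  v_add : ∀ a b : L, min (v a) (v b) ≤ v (a + b)
  v_z : v z = 1

namespace DVField

variable {L : Type} [Field L]

/-- `Wₙ(O) ⊆ Wₙ(L)`: the truncated Witt vectors all of whose components are integral. -/
def WO (D : DVField L) (p n : ℕ) : Set (TruncatedWittVector p n L) :=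
  {x | ∀ i : Fin n, 0 ≤ D.v (x.coeff i)}

/-- The Brylinski–Kato filtration
`fil^log_r Wₙ(L) = {(a₀, …, a_{n-1}) | p^{n-1-i} · v(aᵢ) ≥ -r for all i}`. -/
def filLog (D : DVField L) (p r n : ℕ) : Set (TruncatedWittVector p n L) :=
  {x | ∀ i : Fin n, (↑(-(r : ℤ)) : WithTop ℤ) ≤ p ^ (n - 1 - (i : ℕ)) • D.v (x.coeff i)}

end DVField

/-- The Verschiebung `V : Wₙ(L) → W_{n+1}(L)`, shifting components. -/
def wV {p : ℕ} {L : Type} [Field L] {n : ℕ} (x : TruncatedWittVector p n L) :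
    TruncatedWittVector p (n + 1) L :=
  TruncatedWittVector.mk p fun i =>
    if h : (i : ℕ) = 0 then 0 else x.coeff ⟨(i : ℕ) - 1, by have := i.isLt; omega⟩

/-- The iterated Verschiebung `V^{n-m} : W_m(L) → Wₙ(L)` (for `m ≤ n`), given by shifting
components by `n - m`. -/
def wVit {p : ℕ} {L : Type} [Field L] {m n : ℕ} (x : TruncatedWittVector p m L) :
    TruncatedWittVector p n L :=
  TruncatedWittVector.mk p fun i =>
    if h : n - m ≤ (i : ℕ) ∧ (i : ℕ) - (n - m) < m then x.coeff ⟨(i : ℕ) - (n - m), h.2⟩ else 0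

/-- The restriction `R : W_{n+1}(L) → Wₙ(L)`, dropping the last component. -/
def wR {p : ℕ} {L : Type} [Field L] {n : ℕ} (x : TruncatedWittVector p (n + 1) L) :
    TruncatedWittVector p n L :=
  TruncatedWittVector.mk p fun i => x.coeff i.castSucc

/-- The iterated restriction `R^{m-n} : W_m(L) → Wₙ(L)` (for `n ≤ m`), keeping the first `n`
components. -/
def wRes {p : ℕ} {L : Type} [Field L] {m n : ℕ} (x : TruncatedWittVector p m L) :
    TruncatedWittVector p n L :=
  TruncatedWittVector.mk p fun i => if h : (i : ℕ) < m then x.coeff ⟨(i : ℕ), h⟩ else 0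

/-- The Frobenius `F : W_{n+1}(L) → Wₙ(L)` in characteristic `p`:
componentwise `p`-th power followed by restriction. -/
def wF {p : ℕ} {L : Type} [Field L] {n : ℕ} (x : TruncatedWittVector p (n + 1) L) :
    TruncatedWittVector p n L :=
  TruncatedWittVector.mk p fun i => x.coeff i.castSucc ^ p

/-- The Teichmüller lift `[a] = (a, 0, …, 0)`. -/
def wT (p : ℕ) {L : Type} [Field L] (n : ℕ) (a : L) : TruncatedWittVector p n L :=
  TruncatedWittVector.mk p fun i => if (i : ℕ) = 0 then a else 0

/-- The map `p̲ : Wₙ(L) → W_{n+1}(L)`: lift to length `n+1` (by appending a zero component)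
and multiply by `p`. -/
def wP {p : ℕ} [Fact p.Prime] {L : Type} [Field L] {n : ℕ} (x : TruncatedWittVector p n L) :
    TruncatedWittVector p (n + 1) L :=
  p • (wRes x : TruncatedWittVector p (n + 1) L)

namespace DVField

variable {L : Type} [Field L]

/-- The Kato–Matsuda filtration
`fil_r Wₙ(L) = fil^log_{r-1} Wₙ(L) + V^{n-m}(fil^log_r W_m(L))` where `m = min(v_p(r), n)`,
and `fil_0 Wₙ(L) = Wₙ(O)`. -/
def filKM (D : DVField L) (p : ℕ) [Fact p.Prime] (r n : ℕ) :
    Set (TruncatedWittVector p n L) :=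
  if r = 0 then D.WO p n
  else {x | ∃ a ∈ D.filLog p (r - 1) n,
    ∃ b ∈ D.filLog p r (min (padicValNat p r) n), x = a + wVit b}

/-- The `p`-saturation `Fil^p_r Wₙ(L) = Σ_{s=0}^{n-1} p^s · fil_{r·p^s} Wₙ(L)`. -/
def FilP (D : DVField L) (p : ℕ) [Fact p.Prime] (r n : ℕ) :
    Set (TruncatedWittVector p n L) :=
  {x | ∃ f : Fin n → TruncatedWittVector p n L,
      (∀ s : Fin n, f s ∈ D.filKM p (r * p ^ (s : ℕ)) n) ∧
      x = ∑ s : Fin n, p ^ (s : ℕ) • f s}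

end DVField

section AuxWitt

open WittVector

variable {p : ℕ} [hp : Fact p.Prime]

lemma ghost_helper0 {S : Type*} [CommRing S] (a : S) (w : WittVector p S) (n : ℕ) :
    WittVector.ghostComponent n (WittVector.teichmuller p a + WittVector.verschiebung w)
      = WittVector.ghostComponent n
        (WittVector.mk p fun k => if k = 0 then a else w.coeff (k - 1)) := by
  cases n with
  | zero =>
    rw [map_add, ghostComponent_teichmuller, ghostComponent_zero_verschiebung,
      ghostComponent_apply, aeval_wittPolynomial]
    simp [WittVector.coeff_mk]
  | succ n =>
    have hR : WittVector.ghostComponent (n + 1)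
        (WittVector.mk p fun k => if k = 0 then a else w.coeff (k - 1))
        = a ^ p ^ (n + 1)
          + ∑ i ∈ Finset.range (n + 1), (p : S) ^ (i + 1) * w.coeff i ^ p ^ (n - i) := by
      rw [ghostComponent_apply, aeval_wittPolynomial, Finset.sum_range_succ']
      simp only [WittVector.coeff_mk, if_neg (Nat.succ_ne_zero _), Nat.add_sub_cancel,
        if_pos rfl, Nat.succ_sub_succ_eq_sub, pow_zero, one_mul, Nat.sub_zero]
      rw [add_comm]
      simp
    have hL : WittVector.ghostComponent (n + 1)
        (WittVector.teichmuller p a + WittVector.verschiebung w)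
        = a ^ p ^ (n + 1)
          + (p : S) * ∑ i ∈ Finset.range (n + 1), (p : S) ^ i * w.coeff i ^ p ^ (n - i) := by
      rw [map_add, ghostComponent_teichmuller, ghostComponent_verschiebung,
        ghostComponent_apply, aeval_wittPolynomial]
    rw [hL, hR, Finset.mul_sum]
    congr 1
    apply Finset.sum_congr rfl
    intro i _
    ring

open MvPolynomial in
/-- The fundamental decomposition: `[a] + V w` has coefficients `(a, w₀, w₁, …)`. -/
lemma teich_add_versch_coeff {R : Type*} [CommRing R] (a : R) (w : WittVector p R) (n : ℕ) :
    (WittVector.teichmuller p a + WittVector.verschiebung w).coeff n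
      = if n = 0 then a else w.coeff (n - 1) := by
  have huniv : (WittVector.teichmuller p (X none : MvPolynomial (Option ℕ) ℤ)
        + WittVector.verschiebung (WittVector.mk p fun i => X (some i)))
      = WittVector.mk p (fun k => if k = 0 then (X none : MvPolynomial (Option ℕ) ℤ)
          else X (some (k - 1))) := by
    apply WittVector.map_injective (MvPolynomial.map (Int.castRingHom ℚ))
      (MvPolynomial.map_injective _ Int.cast_injective)
    apply (WittVector.ghostMap.bijective_of_invertible p
      (MvPolynomial (Option ℕ) ℚ)).injective
    funext k
    simp only [WittVector.ghostMap_apply]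
    rw [map_add, WittVector.map_teichmuller, WittVector.map_verschiebung]
    have h1 : WittVector.map (MvPolynomial.map (Int.castRingHom ℚ))
        (WittVector.mk p fun i => (X (some i) : MvPolynomial (Option ℕ) ℤ))
        = WittVector.mk p fun i => (X (some i) : MvPolynomial (Option ℕ) ℚ) := by
      ext i; simp [WittVector.map_coeff, WittVector.coeff_mk]
    have h2 : WittVector.map (MvPolynomial.map (Int.castRingHom ℚ))
        (WittVector.mk p (fun k => if k = 0 then (X none : MvPolynomial (Option ℕ) ℤ)
          else X (some (k - 1))))
        = WittVector.mk p (fun k => if k = 0 then (X none : MvPolynomial (Option ℕ) ℚ)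
          else X (some (k - 1))) := by
      ext i; simp only [WittVector.map_coeff, WittVector.coeff_mk]
      split <;> simp
    rw [h1, h2, MvPolynomial.map_X]
    have := ghost_helper0 (p := p) (X none : MvPolynomial (Option ℕ) ℚ)
      (WittVector.mk p fun i => X (some i)) k
    simpa [WittVector.coeff_mk] using this
  set g : MvPolynomial (Option ℕ) ℤ →+* R :=
    (MvPolynomial.aeval (fun o : Option ℕ => Option.rec a w.coeff o)).toRingHom with hg
  have := congrArg (WittVector.map g) huniv
  rw [map_add, WittVector.map_teichmuller, WittVector.map_verschiebung] at this
  have h1 : WittVector.map g (WittVector.mk p fun i => (X (some i) : MvPolynomial (Option ℕ) ℤ))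
      = w := by
    ext i; simp [WittVector.map_coeff, WittVector.coeff_mk, hg]
  have h2 : g (X none) = a := by simp [hg]
  rw [h1, h2] at this
  have := congrArg (fun x : WittVector p R => x.coeff n) this
  simp only [WittVector.map_coeff, WittVector.coeff_mk] at this
  rw [this]
  split <;> simp [hg]

lemma decompose0 {R : Type*} [CommRing R] (x : WittVector p R) :
    x = WittVector.teichmuller p (x.coeff 0)
        + WittVector.verschiebung (WittVector.mk p fun i => x.coeff (i + 1)) := by
  ext n
  rw [teich_add_versch_coeff]
  rcases n with _ | n
  · simp
  · simp [WittVector.coeff_mk]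

lemma frob_teich0 {R : Type*} [CommRing R] [CharP R p] (c : R) :
    WittVector.frobenius (WittVector.teichmuller p c) = WittVector.teichmuller p (c ^ p) := by
  rw [frobenius_eq_map_frobenius, WittVector.map_teichmuller]
  rfl

lemma teich_mul_coeff {R : Type*} [CommRing R] [CharP R p] (c : R) (x : WittVector p R) (n : ℕ) :
    (WittVector.teichmuller p c * x).coeff n = c ^ p ^ n * x.coeff n := by
  induction n generalizing c x with
  | zero => rw [mul_coeff_zero, teichmuller_coeff_zero, pow_zero, pow_one]
  | succ n ih =>
    conv_lhs => rw [decompose0 x]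
    rw [mul_add, ← map_mul]
    have hv : WittVector.teichmuller p c
        * WittVector.verschiebung (WittVector.mk p fun i => x.coeff (i + 1))
        = WittVector.verschiebung ((WittVector.mk p fun i => x.coeff (i + 1))
            * WittVector.teichmuller p (c ^ p)) := by
      rw [mul_comm, ← frob_teich0, WittVector.verschiebung_mul_frobenius]
    rw [hv, teich_add_versch_coeff]
    rw [if_neg (Nat.succ_ne_zero n), Nat.add_sub_cancel, mul_comm
      (WittVector.mk p fun i => x.coeff (i + 1)), ih]
    rw [WittVector.coeff_mk]
    rw [← pow_mul, ← pow_succ']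

/-- componentwise application of a ring hom to a truncated Witt vector -/
def cmap {A B : Type*} [CommRing A] [CommRing B] (f : A →+* B) {n : ℕ}
    (x : TruncatedWittVector p n A) : TruncatedWittVector p n B :=
  TruncatedWittVector.mk p fun i => f (x.coeff i)

lemma cmap_coeff {A B : Type*} [CommRing A] [CommRing B] (f : A →+* B) {n : ℕ}
    (x : TruncatedWittVector p n A) (i : Fin n) :
    (cmap f x).coeff i = f (x.coeff i) := TruncatedWittVector.coeff_mk _ _

lemma cmap_truncateFun {A B : Type*} [CommRing A] [CommRing B] (f : A →+* B) {n : ℕ}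
    (X : WittVector p A) :
    cmap f (WittVector.truncateFun n X) = WittVector.truncateFun n (WittVector.map f X) := by
  apply TruncatedWittVector.ext
  intro i
  rw [cmap_coeff, WittVector.coeff_truncateFun, WittVector.coeff_truncateFun,
    WittVector.map_coeff]

lemma cmap_mul {A B : Type*} [CommRing A] [CommRing B] (f : A →+* B) {n : ℕ}
    (x y : TruncatedWittVector p n A) : cmap f (x * y) = cmap f x * cmap f y := by
  obtain ⟨X, rfl⟩ := WittVector.truncateFun_surjective p n A x
  obtain ⟨Y, rfl⟩ := WittVector.truncateFun_surjective p n A y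
  rw [← WittVector.truncateFun_mul, cmap_truncateFun, cmap_truncateFun, cmap_truncateFun,
    map_mul, WittVector.truncateFun_mul]

lemma cmap_add {A B : Type*} [CommRing A] [CommRing B] (f : A →+* B) {n : ℕ}
    (x y : TruncatedWittVector p n A) : cmap f (x + y) = cmap f x + cmap f y := by
  obtain ⟨X, rfl⟩ := WittVector.truncateFun_surjective p n A x
  obtain ⟨Y, rfl⟩ := WittVector.truncateFun_surjective p n A y
  rw [← WittVector.truncateFun_add, cmap_truncateFun, cmap_truncateFun, cmap_truncateFun,
    map_add, WittVector.truncateFun_add]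

lemma cmap_neg {A B : Type*} [CommRing A] [CommRing B] (f : A →+* B) {n : ℕ}
    (x : TruncatedWittVector p n A) : cmap f (-x) = -cmap f x := by
  obtain ⟨X, rfl⟩ := WittVector.truncateFun_surjective p n A x
  rw [← WittVector.truncateFun_neg, cmap_truncateFun, cmap_truncateFun, map_neg,
    WittVector.truncateFun_neg]

lemma wT_eq {L : Type} [Field L] (n : ℕ) (c : L) :
    wT p n c = WittVector.truncateFun n (WittVector.teichmuller p c) := by
  apply TruncatedWittVector.ext
  intro i
  rw [WittVector.coeff_truncateFun]
  show (if (i : ℕ) = 0 then c else 0) = _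
  rcases Nat.eq_zero_or_pos (i : ℕ) with h | h
  · rw [if_pos h, h, WittVector.teichmuller_coeff_zero]
  · rw [if_neg (Nat.pos_iff_ne_zero.mp h), WittVector.teichmuller_coeff_pos p c _ h]

lemma wT_mul_coeff {L : Type} [Field L] [CharP L p] {n : ℕ} (c : L)
    (x : TruncatedWittVector p n L) (i : Fin n) :
    (wT p n c * x).coeff i = c ^ p ^ (i : ℕ) * x.coeff i := by
  obtain ⟨X, rfl⟩ := WittVector.truncateFun_surjective p n L x
  rw [wT_eq, ← WittVector.truncateFun_mul, WittVector.coeff_truncateFun,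
    WittVector.coeff_truncateFun, teich_mul_coeff]

lemma wT_mul {L : Type} [Field L] (n : ℕ) (a b : L) :
    wT p n (a * b) = wT p n a * wT p n b := by
  rw [wT_eq, wT_eq, wT_eq, MonoidHom.map_mul, WittVector.truncateFun_mul]

end AuxWitt

section AuxVal

lemma wsmul_coe (k : ℕ) (m : ℤ) : k • ((m : WithTop ℤ)) = (((k : ℤ) * m : ℤ) : WithTop ℤ) := by
  induction k with
  | zero => simp
  | succ k ih => rw [succ_nsmul, ih, ← WithTop.coe_add, WithTop.coe_eq_coe]; push_cast; ring

lemma wsmul_top {k : ℕ} (hk : k ≠ 0) : k • (⊤ : WithTop ℤ) = ⊤ := by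
  cases k with
  | zero => exact absurd rfl hk
  | succ k => rw [succ_nsmul]; exact add_top _

lemma wsmul_nonneg (k : ℕ) {a : WithTop ℤ} (ha : 0 ≤ a) : 0 ≤ k • a := by
  rcases eq_or_ne a ⊤ with rfl | ht
  · rcases Nat.eq_zero_or_pos k with rfl | hk
    · simp
    · rw [wsmul_top (by omega)]; exact le_top
  · obtain ⟨m, hm⟩ := WithTop.ne_top_iff_exists.mp ht
    rw [← hm] at ha ⊢
    rw [wsmul_coe]
    rw [show (0 : WithTop ℤ) = ((0 : ℤ) : WithTop ℤ) from rfl, WithTop.coe_le_coe] at ha ⊢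
    positivity

lemma int_key {P : ℤ} (hP : 1 ≤ P) {i k : ℕ} (hik : i ≤ k) (r m : ℤ) :
    -r ≤ P ^ (k - i) * m ↔ 0 ≤ r * P ^ i + P ^ k * m := by
  have hA : (0 : ℤ) < P ^ i := pow_pos (by omega) i
  have hQ : P ^ k = P ^ i * P ^ (k - i) := by
    rw [← pow_add]; congr 1; omega
  constructor
  · intro h
    have h2 := mul_le_mul_of_nonneg_left h (le_of_lt hA)
    rw [hQ]; nlinarith
  · intro h
    have h2 : 0 ≤ P ^ i * (r + P ^ (k - i) * m) := by rw [hQ] at h; nlinarith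
    have h3 : (0 : ℤ) ≤ r + P ^ (k - i) * m := nonneg_of_mul_nonneg_right h2 hA
    linarith

namespace DVField

variable {L : Type} [Field L]

lemma v_zero (D : DVField L) : D.v 0 = ⊤ := (D.v_top 0).mpr rfl

lemma v_one (D : DVField L) : D.v 1 = 0 := by
  have h := D.v_mul 1 1
  rw [one_mul] at h
  have hne : D.v 1 ≠ ⊤ := fun ht => one_ne_zero ((D.v_top 1).mp ht)
  rcases WithTop.ne_top_iff_exists.mp hne with ⟨m, hm⟩
  rw [← hm] at h ⊢
  rw [← WithTop.coe_add, WithTop.coe_eq_coe] at h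
  have : m = 0 := by omega
  rw [this]; rfl

lemma v_neg (D : DVField L) (a : L) : D.v (-a) = D.v a := by
  have h1 : D.v (-1 : L) = 0 := by
    have h := D.v_mul (-1) (-1)
    rw [neg_one_mul, neg_neg, D.v_one] at h
    rcases (eq_or_ne (D.v (-1)) ⊤) with ht | ht
    · rw [ht] at h; simp at h
    · rcases WithTop.ne_top_iff_exists.mp ht with ⟨m, hm⟩
      rw [← hm] at h ⊢
      rw [eq_comm, ← WithTop.coe_add, WithTop.coe_eq_zero] at h
      have : m = 0 := by omega
      rw [this]; rfl
  calc D.v (-a) = D.v ((-1) * a) := by rw [neg_one_mul]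
  _ = D.v a := by rw [D.v_mul, h1, zero_add]

lemma v_pow (D : DVField L) (a : L) (k : ℕ) : D.v (a ^ k) = k • D.v a := by
  induction k with
  | zero => rw [pow_zero, D.v_one, zero_nsmul]
  | succ k ih => rw [pow_succ, D.v_mul, ih, succ_nsmul]

lemma v_z_pow (D : DVField L) (k : ℕ) : D.v (D.z ^ k) = ((k : ℤ) : WithTop ℤ) := by
  rw [D.v_pow, D.v_z]
  show k • ((1 : ℤ) : WithTop ℤ) = _
  rw [wsmul_coe, mul_one]

lemma v_nonneg_add (D : DVField L) {a b : L} (ha : 0 ≤ D.v a) (hb : 0 ≤ D.v b) :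
    0 ≤ D.v (a + b) :=
  le_trans (le_min ha hb) (D.v_add a b)

/-- The valuation subring `O` of `L`. -/
def Oring (D : DVField L) : Subring L where
  carrier := {a | 0 ≤ D.v a}
  one_mem' := by simp only [Set.mem_setOf_eq, D.v_one]; exact le_refl _
  mul_mem' := by
    intro a b ha hb
    simp only [Set.mem_setOf_eq, D.v_mul]
    exact add_nonneg ha hb
  zero_mem' := by simp only [Set.mem_setOf_eq, D.v_zero]; exact le_top
  add_mem' := fun ha hb => D.v_nonneg_add ha hb
  neg_mem' := by intro a ha; simpa only [Set.mem_setOf_eq, D.v_neg] using ha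

variable {p : ℕ} [hp : Fact p.Prime]

lemma mem_WO_iff (D : DVField L) {n : ℕ} (x : TruncatedWittVector p n L) :
    x ∈ D.WO p n ↔ ∃ x' : TruncatedWittVector p n D.Oring, cmap D.Oring.subtype x' = x := by
  constructor
  · intro hx
    refine ⟨TruncatedWittVector.mk p fun i => ⟨x.coeff i, hx i⟩, ?_⟩
    apply TruncatedWittVector.ext
    intro i
    rw [cmap_coeff, TruncatedWittVector.coeff_mk]
    rfl
  · rintro ⟨x', rfl⟩
    intro i
    rw [cmap_coeff]
    exact (x'.coeff i).2

lemma WO_mul (D : DVField L) {n : ℕ} {x y : TruncatedWittVector p n L}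
    (hx : x ∈ D.WO p n) (hy : y ∈ D.WO p n) : x * y ∈ D.WO p n := by
  rw [mem_WO_iff] at hx hy ⊢
  obtain ⟨x', rfl⟩ := hx
  obtain ⟨y', rfl⟩ := hy
  exact ⟨x' * y', cmap_mul _ _ _⟩

lemma WO_add (D : DVField L) {n : ℕ} {x y : TruncatedWittVector p n L}
    (hx : x ∈ D.WO p n) (hy : y ∈ D.WO p n) : x + y ∈ D.WO p n := by
  rw [mem_WO_iff] at hx hy ⊢
  obtain ⟨x', rfl⟩ := hx
  obtain ⟨y', rfl⟩ := hy
  exact ⟨x' + y', cmap_add _ _ _⟩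

lemma WO_neg (D : DVField L) {n : ℕ} {x : TruncatedWittVector p n L}
    (hx : x ∈ D.WO p n) : -x ∈ D.WO p n := by
  rw [mem_WO_iff] at hx ⊢
  obtain ⟨x', rfl⟩ := hx
  exact ⟨-x', cmap_neg _ _⟩

lemma mem_fil_iff [CharP L p] (D : DVField L) (r n : ℕ)
    (x : TruncatedWittVector p n L) :
    x ∈ D.filLog p r n ↔
      wT p n (D.z ^ r) * cmap (iterateFrobenius L p (n - 1)) x ∈ D.WO p n := by
  have hp2 : 2 ≤ p := hp.out.two_le
  have hP : (1 : ℤ) ≤ (p : ℤ) := by exact_mod_cast (by omega : 1 ≤ p)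
  constructor <;> intro h i <;> have hi := h i
  case mp =>
    rw [wT_mul_coeff, cmap_coeff, iterateFrobenius_def, D.v_mul, ← pow_mul, D.v_z_pow,
      D.v_pow]
    rcases eq_or_ne (D.v (x.coeff i)) ⊤ with ht | ht
    · rw [ht, wsmul_top (pow_ne_zero _ (by omega)), add_top]
      exact le_top
    · obtain ⟨m, hm⟩ := WithTop.ne_top_iff_exists.mp ht
      rw [← hm] at hi ⊢
      rw [wsmul_coe] at hi ⊢
      rw [← WithTop.coe_add]
      rw [WithTop.coe_le_coe] at hi
      rw [show (0 : WithTop ℤ) = ((0 : ℤ) : WithTop ℤ) from rfl, WithTop.coe_le_coe]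
      have key := (int_key (P := (p : ℤ)) hP
        (i := (i : ℕ)) (k := n - 1) (by omega) (r : ℤ) m).mp (by push_cast at hi ⊢; linarith)
      push_cast at key ⊢
      linarith
  case mpr =>
    rw [wT_mul_coeff, cmap_coeff, iterateFrobenius_def, D.v_mul, ← pow_mul, D.v_z_pow,
      D.v_pow] at hi
    rcases eq_or_ne (D.v (x.coeff i)) ⊤ with ht | ht
    · rw [ht, wsmul_top (pow_ne_zero _ (by omega))]
      exact le_top
    · obtain ⟨m, hm⟩ := WithTop.ne_top_iff_exists.mp ht
      rw [← hm] at hi ⊢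
      rw [wsmul_coe] at hi ⊢
      rw [← WithTop.coe_add, show (0 : WithTop ℤ) = ((0 : ℤ) : WithTop ℤ) from rfl,
        WithTop.coe_le_coe] at hi
      rw [WithTop.coe_le_coe]
      have key := (int_key (P := (p : ℤ)) hP
        (i := (i : ℕ)) (k := n - 1) (by omega) (r : ℤ) m).mpr (by push_cast at hi ⊢; linarith)
      push_cast at key ⊢
      linarith

end DVField

end AuxVal

/-- For all `r, s ≥ 0` and `n ≥ 1`, the product in `Wₙ(L)` satisfies
`fil^log_r Wₙ(L) · fil^log_s Wₙ(L) ⊆ fil^log_{r+s} Wₙ(L)`.  In particular (taking `s = 0`)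
`fil^log_r Wₙ(L)` is a `Wₙ(O)`-submodule of `Wₙ(L)`. -/
theorem statement0 (p : ℕ) [Fact p.Prime] (L : Type) [Field L] [CharP L p]
    (D : DVField L) (n : ℕ) (hn : 1 ≤ n) (r s : ℕ) :
    (∀ x ∈ D.filLog p r n, ∀ y ∈ D.filLog p s n, x * y ∈ D.filLog p (r + s) n) ∧
    ((0 : TruncatedWittVector p n L) ∈ D.filLog p r n ∧
      (∀ x ∈ D.filLog p r n, ∀ y ∈ D.filLog p r n, x + y ∈ D.filLog p r n) ∧
      (∀ x ∈ D.filLog p r n, -x ∈ D.filLog p r n) ∧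
      (∀ a ∈ D.WO p n, ∀ x ∈ D.filLog p r n, a * x ∈ D.filLog p r n)) := by
  constructor
  · intro x hx y hy
    rw [D.mem_fil_iff] at hx hy ⊢
    have heq : wT p n (D.z ^ (r + s)) * cmap (iterateFrobenius L p (n - 1)) (x * y)
        = (wT p n (D.z ^ r) * cmap (iterateFrobenius L p (n - 1)) x)
          * (wT p n (D.z ^ s) * cmap (iterateFrobenius L p (n - 1)) y) := by
      rw [cmap_mul, pow_add, wT_mul]; ring
    rw [heq]
    exact D.WO_mul hx hy
  refine ⟨?_, ?_, ?_, ?_⟩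
  · intro i
    rw [TruncatedWittVector.coeff_zero, D.v_zero, wsmul_top (pow_ne_zero _ (Nat.Prime.ne_zero Fact.out))]
    exact le_top
  · intro x hx y hy
    rw [D.mem_fil_iff] at hx hy ⊢
    have heq : wT p n (D.z ^ r) * cmap (iterateFrobenius L p (n - 1)) (x + y)
        = wT p n (D.z ^ r) * cmap (iterateFrobenius L p (n - 1)) x
          + wT p n (D.z ^ r) * cmap (iterateFrobenius L p (n - 1)) y := by
      rw [cmap_add, mul_add]
    rw [heq]
    exact D.WO_add hx hy
  · intro x hx
    rw [D.mem_fil_iff] at hx ⊢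
    have heq : wT p n (D.z ^ r) * cmap (iterateFrobenius L p (n - 1)) (-x)
        = -(wT p n (D.z ^ r) * cmap (iterateFrobenius L p (n - 1)) x) := by
      rw [cmap_neg, mul_neg]
    rw [heq]
    exact D.WO_neg hx
  · intro a ha x hx
    rw [D.mem_fil_iff] at hx ⊢
    have ha' : cmap (iterateFrobenius L p (n - 1)) a ∈ D.WO p n := by
      intro i
      rw [cmap_coeff, iterateFrobenius_def, D.v_pow]
      exact wsmul_nonneg _ (ha i)
    have heq : wT p n (D.z ^ r) * cmap (iterateFrobenius L p (n - 1)) (a * x)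
        = cmap (iterateFrobenius L p (n - 1)) a
          * (wT p n (D.z ^ r) * cmap (iterateFrobenius L p (n - 1)) x) := by
      rw [cmap_mul]; ring
    rw [heq]
    exact D.WO_mul ha' hx
end
end

section
/- (Weight-zero case of the paper's Lemma on rounding the p-saturated filtration.) For every n ≥ 1, every 0 ≤ s ≤ n−1 and every r ≥ 1, one has the equality of subsets of Wₙ(L): p^s·fil^log_{(r−1)p^s} Wₙ(L) = p^s·fil^log_{r·p^s − 1} Wₙ(L), where p^s·S denotes the set of elements p^s x with x ∈ S. -/
noncomputable section

open scoped Classical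

section Aux

open WittVector

private lemma wv_nsmul_eq_mul {p : ℕ} [Fact p.Prime] {L : Type} [CommRing L]
    (m : ℕ) (y : WittVector p L) : m • y = (m : WittVector p L) * y := by
  have h : @HSMul.hSMul ℕ _ _ (@instHSMul ℕ _ NSMul.toSMul) m y
      = (m : WittVector p L) * y := nsmul_eq_mul m y
  exact h

private lemma tw_nsmul_eq_mul {p : ℕ} [Fact p.Prime] {L : Type} [CommRing L] {n : ℕ}
    (m : ℕ) (x : TruncatedWittVector p n L) : m • x = (m : TruncatedWittVector p n L) * x := by
  have h : @HSMul.hSMul ℕ _ _ (@instHSMul ℕ _ NSMul.toSMul) m x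
      = (m : TruncatedWittVector p n L) * x := nsmul_eq_mul m x
  exact h

private lemma wv_mul_p_pow_coeff {p : ℕ} [hp : Fact p.Prime] {L : Type} [CommRing L] [CharP L p]
    (y : WittVector p L) (s : ℕ) : ∀ i : ℕ,
    (y * (p : WittVector p L) ^ s).coeff i =
      if i < s then 0 else y.coeff (i - s) ^ p ^ s := by
  induction s with
  | zero => intro i; simp
  | succ s ih =>
    intro i
    have hps : y * (p : WittVector p L) ^ (s + 1) = y * (p : WittVector p L) ^ s * p := by ring
    rw [hps]
    cases i with
    | zero =>
      rw [WittVector.mul_charP_coeff_zero, if_pos (Nat.succ_pos s)]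
    | succ j =>
      rw [WittVector.mul_charP_coeff_succ, ih j]
      by_cases h : j < s
      · rw [if_pos h, if_pos (by omega), zero_pow hp.out.ne_zero]
      · rw [if_neg h, if_neg (by omega)]
        have hj : j + 1 - (s + 1) = j - s := by omega
        rw [hj, ← pow_mul, pow_succ]

private lemma tw_smul_p_pow_coeff {p : ℕ} [hp : Fact p.Prime] {L : Type} [CommRing L] [CharP L p]
    {n : ℕ} (x : TruncatedWittVector p n L) (s : ℕ) (i : Fin n) :
    (p ^ s • x).coeff i =
      if (i : ℕ) < s then 0
      else x.coeff ⟨(i : ℕ) - s, lt_of_le_of_lt (Nat.sub_le _ _) i.isLt⟩ ^ p ^ s := by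
  have hx : WittVector.truncate n x.out = x := TruncatedWittVector.truncateFun_out x
  have h1 : p ^ s • x = WittVector.truncate n (x.out * (p : WittVector p L) ^ s) := by
    rw [tw_nsmul_eq_mul]
    conv_lhs => rw [← hx]
    rw [← map_natCast (WittVector.truncate (p := p) n) (p ^ s), ← map_mul]
    congr 1
    rw [mul_comm, Nat.cast_pow]
  rw [h1, WittVector.coeff_truncate, wv_mul_p_pow_coeff]
  by_cases h : (i : ℕ) < s
  · rw [if_pos h, if_pos h]
  · rw [if_neg h, if_neg h]
    have := TruncatedWittVector.coeff_out x ⟨(i : ℕ) - s, lt_of_le_of_lt (Nat.sub_le _ _) i.isLt⟩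
    rw [← this]

private lemma withtop_nsmul_top {k : ℕ} (hk : 0 < k) : k • (⊤ : WithTop ℤ) = ⊤ := by
  obtain ⟨m, rfl⟩ : ∃ m, k = m + 1 := ⟨k - 1, by omega⟩
  rw [succ_nsmul]
  exact add_top _

end Aux

/-- (Weight-zero rounding lemma.)  For every `n ≥ 1`, every `0 ≤ s ≤ n-1` and
every `r ≥ 1`, `p^s · fil^log_{(r-1)p^s} Wₙ(L) = p^s · fil^log_{r·p^s - 1} Wₙ(L)` as subsets
of `Wₙ(L)`. -/
theorem statement3 (p : ℕ) [Fact p.Prime] (L : Type) [Field L] [CharP L p]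
    (D : DVField L) (n : ℕ) (hn : 1 ≤ n) (s : ℕ) (hs : s ≤ n - 1) (r : ℕ) (hr : 1 ≤ r) :
    (fun x : TruncatedWittVector p n L => p ^ s • x) '' D.filLog p ((r - 1) * p ^ s) n =
      (fun x : TruncatedWittVector p n L => p ^ s • x) '' D.filLog p (r * p ^ s - 1) n := by
  have hp0 : 0 < p := (Fact.out : p.Prime).pos
  have hps1 : 1 ≤ p ^ s := Nat.one_le_pow _ _ hp0
  have hkey : (r - 1) * p ^ s ≤ r * p ^ s - 1 := by
    obtain ⟨r', rfl⟩ : ∃ r', r = r' + 1 := ⟨r - 1, by omega⟩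
    rw [Nat.add_sub_cancel, add_mul, one_mul]
    set a := r' * p ^ s
    omega
  apply Set.Subset.antisymm
  · apply Set.image_mono
    intro x hx i
    refine le_trans ?_ (hx i)
    exact WithTop.coe_le_coe.mpr (neg_le_neg (by exact_mod_cast hkey))
  · rintro y ⟨x, hx, rfl⟩
    set x' : TruncatedWittVector p n L :=
      TruncatedWittVector.mk p fun j => if (j : ℕ) < n - s then x.coeff j else 0 with hx'def
    refine ⟨x', ?_, ?_⟩
    · intro j
      rw [hx'def, TruncatedWittVector.coeff_mk]
      by_cases hj : (j : ℕ) < n - s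
      · rw [if_pos hj]
        have hxj := hx j
        have hsk : s ≤ n - 1 - (j : ℕ) := by omega
        cases hv : D.v (x.coeff j) with
        | top =>
          rw [withtop_nsmul_top (Nat.pow_pos hp0)]
          exact le_top
        | coe m =>
          rw [hv] at hxj
          rw [← WithTop.coe_nsmul] at hxj ⊢
          rw [WithTop.coe_le_coe] at hxj ⊢
          rw [nsmul_eq_mul] at hxj ⊢
          obtain ⟨t, ht⟩ : ∃ t, n - 1 - (j : ℕ) = s + t := ⟨n - 1 - (j : ℕ) - s, by omega⟩
          rw [ht] at hxj ⊢
          have hc1 : ((r * p ^ s - 1 : ℕ) : ℤ) = (r : ℤ) * (p : ℤ) ^ s - 1 := by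
            have : 1 ≤ r * p ^ s := Nat.one_le_iff_ne_zero.mpr (by positivity)
            push_cast [Nat.cast_sub this]
            ring
          have hc2 : (((r - 1) * p ^ s : ℕ) : ℤ) = ((r : ℤ) - 1) * (p : ℤ) ^ s := by
            push_cast [Nat.cast_sub hr]
            ring
          rw [hc1] at hxj
          rw [hc2]
          have hcast : ((p ^ (s + t) : ℕ) : ℤ) = (p : ℤ) ^ s * (p : ℤ) ^ t := by
            push_cast
            rw [pow_add]
          rw [hcast] at hxj ⊢
          set P : ℤ := (p : ℤ) ^ s with hP
          set c : ℤ := (p : ℤ) ^ t * m with hc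
          have hPpos : 0 < P := by positivity
          rw [mul_assoc] at hxj ⊢
          rw [← hc] at hxj ⊢
          have hcge : (1 : ℤ) - (r : ℤ) ≤ c := by nlinarith
          nlinarith
      · rw [if_neg hj]
        have : D.v (0 : L) = ⊤ := (D.v_top 0).mpr rfl
        rw [this, withtop_nsmul_top (Nat.pow_pos hp0)]
        exact le_top
    · show p ^ s • x' = p ^ s • x
      apply TruncatedWittVector.ext
      intro i
      rw [tw_smul_p_pow_coeff, tw_smul_p_pow_coeff]
      have hi := i.isLt
      by_cases h : (i : ℕ) < s
      · rw [if_pos h, if_pos h]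
      · rw [if_neg h, if_neg h]
        congr 1
        rw [hx'def, TruncatedWittVector.coeff_mk]
        rw [if_pos (by simp only [Fin.val_mk]; omega)]
end
end

section
/- (Weight-zero case of the paper's Corollary on the module structure of the p-saturated filtration.) For all integers r ≥ 0 and n ≥ 1: Fil^p_r Wₙ(L) is a Wₙ(O)-submodule of Wₙ(L), and one has the inclusions Wₙ(O) ⊆ Fil^p_r Wₙ(L) ⊆ [z]^{−r·p^{n−1}}·Wₙ(O); equivalently, [z^{r·p^{n−1}}]·Fil^p_r Wₙ(L) ⊆ Wₙ(O), where [·] denotes the Teichmüller lift. -/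
noncomputable section

open scoped Classical

namespace S6Aux


/-! ### WithTop ℤ helpers -/

lemma coe_nsmul (k : ℕ) (a : ℤ) : (k : ℕ) • ((a : WithTop ℤ)) = ((k • a : ℤ) : WithTop ℤ) := by
  induction k with
  | zero => simp
  | succ k ih => rw [succ_nsmul, succ_nsmul, ih, ← WithTop.coe_add]

lemma nsmul_top {k : ℕ} (hk : k ≠ 0) : k • (⊤ : WithTop ℤ) = ⊤ := by
  cases k with
  | zero => omega
  | succ k => rw [succ_nsmul]; simp

lemma nsmul_eq_top_iff {k : ℕ} (hk : k ≠ 0) {x : WithTop ℤ} : k • x = ⊤ ↔ x = ⊤ := by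
  induction x using WithTop.recTopCoe with
  | top => simp [nsmul_top hk]
  | coe a =>
    rw [coe_nsmul]
    exact iff_of_false WithTop.coe_ne_top WithTop.coe_ne_top

lemma nsmul_le_nsmul_iff {k : ℕ} (hk : k ≠ 0) {x y : WithTop ℤ} :
    k • x ≤ k • y ↔ x ≤ y := by
  constructor
  · intro h
    induction y using WithTop.recTopCoe with
    | top => exact le_top
    | coe b =>
      induction x using WithTop.recTopCoe with
      | top =>
        rw [nsmul_top hk, coe_nsmul] at h
        exact absurd (top_le_iff.1 h) WithTop.coe_ne_top
      | coe a =>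
        rw [coe_nsmul, coe_nsmul, WithTop.coe_le_coe, nsmul_eq_mul, nsmul_eq_mul] at h
        have hpos : (0:ℤ) < (k:ℤ) := by exact_mod_cast Nat.pos_of_ne_zero hk
        exact WithTop.coe_le_coe.2 (le_of_mul_le_mul_left h hpos)
  · intro h; exact nsmul_le_nsmul_right h k

lemma eq_top_of_forall_nat_le {y : WithTop ℤ} (h : ∀ N : ℕ, ((N : ℤ) : WithTop ℤ) ≤ y) :
    y = ⊤ := by
  induction y using WithTop.recTopCoe with
  | top => rfl
  | coe a =>
    exfalso
    have := WithTop.coe_le_coe.1 (h (a.toNat + 1))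
    omega

lemma coe_finset_sum {ι : Type*} (s : Finset ι) (f : ι → ℤ) :
    ((∑ i ∈ s, f i : ℤ) : WithTop ℤ) = ∑ i ∈ s, ((f i : ℤ) : WithTop ℤ) := by
  classical
  induction s using Finset.cons_induction with
  | empty => simp
  | cons a s ha ih => rw [Finset.sum_cons, Finset.sum_cons, WithTop.coe_add, ih]



open MvPolynomial

/-! ### Weighted homogeneity machinery -/

variable {R : Type*} [CommRing R] {σ τ : Type*}

lemma iwh_neg {w : σ → ℕ} {φ : MvPolynomial σ R} {m : ℕ}
    (h : IsWeightedHomogeneous w φ m) : IsWeightedHomogeneous w (-φ) m := by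
  intro d hd
  apply h
  simpa using hd

lemma iwh_sub {w : σ → ℕ} {φ ψ : MvPolynomial σ R} {m : ℕ}
    (hφ : IsWeightedHomogeneous w φ m) (hψ : IsWeightedHomogeneous w ψ m) :
    IsWeightedHomogeneous w (φ - ψ) m := by
  rw [sub_eq_add_neg]; exact hφ.add (iwh_neg hψ)

lemma iwh_pow {w : σ → ℕ} {φ : MvPolynomial σ R} {m : ℕ}
    (h : IsWeightedHomogeneous w φ m) (k : ℕ) :
    IsWeightedHomogeneous w (φ ^ k) (k * m) := by
  induction k with
  | zero => simpa using isWeightedHomogeneous_one R w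
  | succ k ih =>
    have e : (k + 1) * m = k * m + m := by ring
    rw [pow_succ, e]
    exact ih.mul h

/-- Pushing forward a weighted homogeneity along an additive monoid hom on degrees. -/
lemma iwh_map_weights {M N : Type*} [AddCommMonoid M] [AddCommMonoid N] (f : M →+ N)
    {w : σ → M} {φ : MvPolynomial σ R} {m : M} (h : IsWeightedHomogeneous w φ m) :
    IsWeightedHomogeneous (fun i => f (w i)) φ (f m) := by
  intro d hd
  rw [← h hd]
  simp only [Finsupp.weight_apply, Finsupp.sum]
  rw [map_sum]
  exact Finset.sum_congr rfl fun i _ => (AddMonoidHom.map_nsmul f _ _).symm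

lemma iwh_bind₁ {w : σ → ℕ} {w' : τ → ℕ} (g : σ → MvPolynomial τ R)
    {φ : MvPolynomial σ R} {m : ℕ} (hφ : IsWeightedHomogeneous w φ m)
    (hg : ∀ i, IsWeightedHomogeneous w' (g i) (w i)) :
    IsWeightedHomogeneous w' (bind₁ g φ) m := by
  conv_lhs => rw [φ.as_sum]
  rw [map_sum]
  apply IsWeightedHomogeneous.sum
  intro d hd
  rw [bind₁_monomial]
  have : IsWeightedHomogeneous w' (∏ i ∈ d.support, g i ^ d i)
      (∑ i ∈ d.support, d i * w i) := by
    apply IsWeightedHomogeneous.prod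
    intro i _
    exact iwh_pow (hg i) (d i)
  have hdeg : (∑ i ∈ d.support, d i * w i) = m := by
    have := hφ (mem_support_iff.1 hd)
    rw [← this, Finsupp.weight_apply, Finsupp.sum]
    exact Finset.sum_congr rfl fun i _ => (smul_eq_mul _ _).symm
  rw [hdeg] at this
  simpa using (isWeightedHomogeneous_C w' (coeff d φ)).mul this

lemma iwh_rename {f : σ → τ} {w : τ → ℕ} {φ : MvPolynomial σ R} {m : ℕ}
    (h : IsWeightedHomogeneous (fun i => w (f i)) φ m) :
    IsWeightedHomogeneous w (rename f φ) m := by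
  intro d hd
  obtain ⟨u, rfl, hu⟩ := coeff_rename_ne_zero _ _ _ hd
  rw [← h hu]
  simp only [Finsupp.weight_apply]
  rw [Finsupp.sum_mapDomain_index (fun i => zero_smul ℕ (w i))
    (fun i b₁ b₂ => add_smul b₁ b₂ (w i))]

lemma iwh_wittPolynomial (p : ℕ) (n : ℕ) :
    IsWeightedHomogeneous (fun j : ℕ => p ^ j) (wittPolynomial p ℚ n) (p ^ n) := by
  rw [wittPolynomial]
  apply IsWeightedHomogeneous.sum
  intro i hi
  apply isWeightedHomogeneous_monomial
  have : (Finsupp.weight fun j : ℕ => p ^ j) (Finsupp.single i (p ^ (n - i)))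
      = p ^ (n - i) * p ^ i := by
    rw [Finsupp.weight_apply]
    rw [Finsupp.sum_single_index]
    · exact smul_eq_mul _ _
    · exact zero_smul ℕ _
  rw [this, ← pow_add]
  congr 1
  rw [Finset.mem_range] at hi
  omega

lemma iwh_xInTermsOfW (p : ℕ) [Fact p.Prime] (n : ℕ) :
    IsWeightedHomogeneous (fun j : ℕ => p ^ j) (xInTermsOfW p ℚ n) (p ^ n) := by
  induction n using Nat.strong_induction_on with
  | _ n IH =>
    rw [xInTermsOfW_eq]
    have h1 : IsWeightedHomogeneous (fun j : ℕ => p ^ j)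
        (X n - ∑ i ∈ Finset.range n, C ((p:ℚ) ^ i) * xInTermsOfW p ℚ i ^ p ^ (n - i))
        (p ^ n) := by
      apply iwh_sub (isWeightedHomogeneous_X ℚ _ n)
      apply IsWeightedHomogeneous.sum
      intro i hi
      rw [Finset.mem_range] at hi
      have h2 := iwh_pow (IH i hi) (p ^ (n - i))
      have h3 := (isWeightedHomogeneous_C (fun j : ℕ => p ^ j) ((p:ℚ) ^ i)).mul h2
      rw [zero_add] at h3
      rw [show p ^ n = p ^ (n - i) * p ^ i by rw [← pow_add]; congr 1; omega]
      exact h3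
    have := h1.mul (isWeightedHomogeneous_C (fun j : ℕ => p ^ j) ((⅟(p:ℚ)) ^ n))
    simpa using this

theorem iwh_wittStructureInt (p : ℕ) [Fact p.Prime] {idx : Type*} (Φ : MvPolynomial idx ℤ)
    (σΦ : idx → ℕ) {m : ℕ} (hΦ : IsWeightedHomogeneous σΦ Φ m) (n : ℕ) :
    IsWeightedHomogeneous (fun bj : idx × ℕ => σΦ bj.1 * p ^ bj.2)
      (wittStructureInt p Φ n) (m * p ^ n) := by
  classical
  have hmapΦ : IsWeightedHomogeneous σΦ (map (Int.castRingHom ℚ) Φ) m := by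
    intro d hd
    apply hΦ
    rw [coeff_map] at hd
    intro h0
    rw [h0] at hd
    simp at hd
  have hrat : IsWeightedHomogeneous (fun bj : idx × ℕ => σΦ bj.1 * p ^ bj.2)
      (wittStructureRat p (map (Int.castRingHom ℚ) Φ) n) (m * p ^ n) := by
    rw [wittStructureRat]
    apply iwh_bind₁ (w := fun k : ℕ => m * p ^ k)
    · exact iwh_map_weights (AddMonoidHom.mulLeft m) (iwh_xInTermsOfW p n)
    · intro k
      apply iwh_bind₁ (w := fun b : idx => σΦ b * p ^ k)
      · exact iwh_map_weights (AddMonoidHom.mulRight (p ^ k)) hmapΦ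
      · intro b
        apply iwh_rename
        exact iwh_map_weights (AddMonoidHom.mulLeft (σΦ b)) (iwh_wittPolynomial p k)
  intro d hd
  apply hrat
  rw [← map_wittStructureInt, coeff_map]
  simp only [Int.coe_castRingHom, ne_eq, Int.cast_eq_zero]
  exact hd



variable {L : Type} [Field L] (D : DVField L)

lemma v_zero : D.v 0 = ⊤ := (D.v_top 0).2 rfl

lemma v_one : D.v 1 = 0 := by
  have h := D.v_mul 1 1
  rw [one_mul] at h
  have h1 : D.v 1 ≠ ⊤ := fun h' => one_ne_zero ((D.v_top 1).1 h')
  lift D.v 1 to ℤ using h1 with a ha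
  rw [← WithTop.coe_add, WithTop.coe_inj] at h
  have : a = 0 := by omega
  rw [this, WithTop.coe_zero]

lemma v_neg (a : L) : D.v (-a) = D.v a := by
  have hm : D.v (-1 : L) = 0 := by
    have h := D.v_mul (-1 : L) (-1 : L)
    rw [neg_one_mul, neg_neg, v_one] at h
    have h1 : D.v (-1 : L) ≠ ⊤ := fun h' => by
      have := (D.v_top (-1)).1 h'
      simp at this
    lift D.v (-1 : L) to ℤ using h1 with b hb
    rw [← WithTop.coe_add, ← WithTop.coe_zero, WithTop.coe_inj] at h
    have : b = 0 := by omega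
    rw [this, WithTop.coe_zero]
  calc D.v (-a) = D.v ((-1) * a) := by rw [neg_one_mul]
  _ = D.v (-1 : L) + D.v a := D.v_mul _ _
  _ = D.v a := by rw [hm, zero_add]

lemma v_pow (a : L) (k : ℕ) : D.v (a ^ k) = k • D.v a := by
  induction k with
  | zero => rw [pow_zero, v_one, zero_smul]
  | succ k ih => rw [pow_succ, D.v_mul, ih, succ_nsmul]

lemma v_prod {ι : Type*} (s : Finset ι) (g : ι → L) :
    D.v (∏ i ∈ s, g i) = ∑ i ∈ s, D.v (g i) := by
  classical
  induction s using Finset.cons_induction with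
  | empty => simp [v_one]
  | cons a s ha ih => rw [Finset.prod_cons, Finset.sum_cons, D.v_mul, ih]

lemma v_intCast_nonneg (p : ℕ) [Fact p.Prime] [CharP L p] (k : ℤ) :
    (0 : WithTop ℤ) ≤ D.v ((k : L)) := by
  by_cases h : ((k : L)) = 0
  · rw [h, v_zero]; exact le_top
  · have hp1 : 1 ≤ p - 1 := by
      have := (Fact.out : p.Prime).two_le
      omega
    set f := ZMod.castHom (dvd_refl p) L with hf
    have hk : f ((k : ZMod p)) = (k : L) := map_intCast f k
    have hkz : ((k : ZMod p)) ≠ 0 := fun h0 => h (by rw [← hk, h0, map_zero])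
    have hpow : ((k : ZMod p)) ^ (p - 1) = 1 := ZMod.pow_card_sub_one_eq_one hkz
    have h1 : ((k : L)) ^ (p - 1) = 1 := by rw [← hk, ← map_pow, hpow, map_one]
    have h2 : (p - 1) • D.v ((k : L)) = 0 := by rw [← v_pow, h1, v_one]
    have h3 : D.v ((k:L)) ≠ ⊤ := fun h' => h ((D.v_top _).1 h')
    lift D.v ((k : L)) to ℤ using h3 with b hb
    rw [coe_nsmul, ← WithTop.coe_zero, WithTop.coe_inj, nsmul_eq_mul] at h2
    have : b = 0 := by
      have : (p:ℤ) - 1 ≠ 0 := by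
        have := (Fact.out : p.Prime).two_le
        omega
      have hcast : ((p - 1 : ℕ) : ℤ) = (p:ℤ) - 1 := by
        have := (Fact.out : p.Prime).two_le
        omega
      rw [hcast] at h2
      exact (mul_eq_zero.1 h2).resolve_left this
    rw [this, WithTop.coe_zero]

lemma v_smul_sum_le {ι : Type*} (s : Finset ι) (g : ι → L) (T : WithTop ℤ) (K : ℕ) (hK : K ≠ 0)
    (h : ∀ i ∈ s, T ≤ K • D.v (g i)) : T ≤ K • D.v (∑ i ∈ s, g i) := by
  classical
  induction s using Finset.cons_induction with
  | empty => rw [Finset.sum_empty, v_zero, nsmul_top hK]; exact le_top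
  | cons a s ha ih =>
    rw [Finset.sum_cons]
    have h1 := h a (Finset.mem_cons_self a s)
    have h2 := ih fun i hi => h i (Finset.mem_cons_of_mem hi)
    have hmin := D.v_add (g a) (∑ i ∈ s, g i)
    have h3 := nsmul_le_nsmul_right hmin K
    refine le_trans ?_ h3
    rcases min_cases (D.v (g a)) (D.v (∑ i ∈ s, g i)) with ⟨he, _⟩ | ⟨he, _⟩ <;> rw [he]
    · exact h1
    · exact h2

theorem v_aeval_le {ι : Type*} (p : ℕ) [Fact p.Prime] [CharP L p] (φ : MvPolynomial ι ℤ)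
    (a : ι → L) (B : ι → ℤ) (T : ℤ) (K : ℕ) (hK : K ≠ 0)
    (hB : ∀ i ∈ φ.vars, (B i : WithTop ℤ) ≤ K • D.v (a i))
    (hs : ∀ d ∈ φ.support, T ≤ d.sum fun i c => (c : ℤ) * B i) :
    (T : WithTop ℤ) ≤ K • D.v (MvPolynomial.aeval a φ) := by
  classical
  rw [MvPolynomial.aeval_def, MvPolynomial.eval₂_eq]
  apply v_smul_sum_le D _ _ _ _ hK
  intro d hd
  rw [D.v_mul, smul_add]
  have hc : (0 : WithTop ℤ) ≤ K • D.v (algebraMap ℤ L (MvPolynomial.coeff d φ)) := by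
    have h0 : (0 : WithTop ℤ) ≤ D.v (((MvPolynomial.coeff d φ : ℤ) : L)) :=
      v_intCast_nonneg D p _
    have := nsmul_le_nsmul_right h0 K
    rw [smul_zero] at this
    simpa [algebraMap_int_eq, eq_intCast] using this
  have hprod : D.v (∏ i ∈ d.support, a i ^ d i) = ∑ i ∈ d.support, (d i) • D.v (a i) := by
    rw [v_prod]
    exact Finset.sum_congr rfl fun i _ => v_pow D _ _
  have h2 : (T : WithTop ℤ) ≤ K • D.v (∏ i ∈ d.support, a i ^ d i) := by
    rw [hprod, Finset.smul_sum]
    have hterm : ∀ i ∈ d.support,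
        (((d i : ℕ) • B i : ℤ) : WithTop ℤ) ≤ K • (d i) • D.v (a i) := by
      intro i hi
      have hvars : i ∈ φ.vars := (MvPolynomial.mem_vars i).2 ⟨d, hd, hi⟩
      have := nsmul_le_nsmul_right (hB i hvars) (d i)
      rw [coe_nsmul] at this
      refine le_trans this ?_
      rw [smul_smul, smul_smul, mul_comm]
    calc (T : WithTop ℤ) ≤ ((d.sum fun i c => (c : ℤ) * B i : ℤ) : WithTop ℤ) :=
          WithTop.coe_le_coe.2 (hs d hd)
    _ = ∑ i ∈ d.support, (((d i : ℕ) • B i : ℤ) : WithTop ℤ) := by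
          rw [Finsupp.sum, coe_finset_sum]
          exact Finset.sum_congr rfl fun i _ => by rw [nsmul_eq_mul]
    _ ≤ ∑ i ∈ d.support, K • (d i) • D.v (a i) := Finset.sum_le_sum hterm
  calc (T : WithTop ℤ) = 0 + (T : WithTop ℤ) := (zero_add _).symm
  _ ≤ _ := add_le_add hc h2


open MvPolynomial

/-! ### Homogeneity of the Witt structure polynomials -/

lemma iwh_wittAdd (p : ℕ) [Fact p.Prime] (i : ℕ) :
    IsWeightedHomogeneous (fun bj : Fin 2 × ℕ => p ^ bj.2) (WittVector.wittAdd p i) (p ^ i) := by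
  have hΦ : IsWeightedHomogeneous (fun _ : Fin 2 => 1)
      ((X 0 + X 1 : MvPolynomial (Fin 2) ℤ)) 1 := by
    have h0 := isWeightedHomogeneous_X ℤ (fun _ : Fin 2 => 1) 0
    have h1 := isWeightedHomogeneous_X ℤ (fun _ : Fin 2 => 1) 1
    exact h0.add h1
  have := iwh_wittStructureInt p (X 0 + X 1 : MvPolynomial (Fin 2) ℤ) _ hΦ i
  simpa [one_mul, WittVector.wittAdd] using this

lemma iwh_wittNeg (p : ℕ) [Fact p.Prime] (i : ℕ) :
    IsWeightedHomogeneous (fun bj : Fin 1 × ℕ => p ^ bj.2) (WittVector.wittNeg p i) (p ^ i) := by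
  have hΦ : IsWeightedHomogeneous (fun _ : Fin 1 => 1)
      ((-X 0 : MvPolynomial (Fin 1) ℤ)) 1 := by
    have h0 := isWeightedHomogeneous_X ℤ (fun _ : Fin 1 => 1) 0
    exact iwh_neg h0
  have := iwh_wittStructureInt p (-X 0 : MvPolynomial (Fin 1) ℤ) _ hΦ i
  simpa [one_mul, WittVector.wittNeg] using this

lemma iwh_wittMul (p : ℕ) [Fact p.Prime] (i : ℕ) (b₀ : Fin 2) :
    IsWeightedHomogeneous (fun bj : Fin 2 × ℕ => (if bj.1 = b₀ then 1 else 0) * p ^ bj.2)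
      (WittVector.wittMul p i) (p ^ i) := by
  have hΦ : IsWeightedHomogeneous (fun b : Fin 2 => if b = b₀ then 1 else 0)
      ((X 0 * X 1 : MvPolynomial (Fin 2) ℤ)) 1 := by
    have h0 := isWeightedHomogeneous_X ℤ (fun b : Fin 2 => if b = b₀ then 1 else 0) 0
    have h1 := isWeightedHomogeneous_X ℤ (fun b : Fin 2 => if b = b₀ then 1 else 0) 1
    have := h0.mul h1
    have he : ((if (0 : Fin 2) = b₀ then 1 else 0) + if (1 : Fin 2) = b₀ then 1 else 0) = 1 := by
      fin_cases b₀ <;> decide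
    rwa [he] at this
  have := iwh_wittStructureInt p (X 0 * X 1 : MvPolynomial (Fin 2) ℤ) _ hΦ i
  simpa [one_mul, WittVector.wittMul] using this

/-! ### Support-sum computations from homogeneity -/

lemma hs_of_iwh₂ {ι : Type*} (φ : MvPolynomial ι ℤ) (w₀ w₁ : ι → ℕ) (m₀ m₁ : ℕ)
    (c₀ c₁ T : ℤ) (B : ι → ℤ)
    (h₀ : IsWeightedHomogeneous w₀ φ m₀) (h₁ : IsWeightedHomogeneous w₁ φ m₁)
    (hB : ∀ i, B i = c₀ * w₀ i + c₁ * w₁ i) (hT : T ≤ c₀ * m₀ + c₁ * m₁) :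
    ∀ d ∈ φ.support, T ≤ d.sum fun i c => (c : ℤ) * B i := by
  classical
  intro d hd
  have e₀ : (∑ i ∈ d.support, (d i : ℤ) * w₀ i) = (m₀ : ℤ) := by
    have h := h₀ (MvPolynomial.mem_support_iff.1 hd)
    rw [Finsupp.weight_apply, Finsupp.sum] at h
    have := congrArg (fun t : ℕ => (t : ℤ)) h
    push_cast at this
    simpa [smul_eq_mul] using this
  have e₁ : (∑ i ∈ d.support, (d i : ℤ) * w₁ i) = (m₁ : ℤ) := by
    have h := h₁ (MvPolynomial.mem_support_iff.1 hd)
    rw [Finsupp.weight_apply, Finsupp.sum] at h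
    have := congrArg (fun t : ℕ => (t : ℤ)) h
    push_cast at this
    simpa [smul_eq_mul] using this
  have : (d.sum fun i c => (c : ℤ) * B i) = c₀ * m₀ + c₁ * m₁ := by
    rw [Finsupp.sum]
    have hcongr : ∀ i ∈ d.support,
        (d i : ℤ) * B i = c₀ * ((d i : ℤ) * w₀ i) + c₁ * ((d i : ℤ) * w₁ i) := by
      intro i _
      rw [hB i]; ring
    rw [Finset.sum_congr rfl hcongr, Finset.sum_add_distrib, ← Finset.mul_sum, ← Finset.mul_sum,
      e₀, e₁]
  rw [this]
  exact hT

variable {L : Type} [Field L] (D : DVField L)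

/-! ### Vanishing via homogeneity -/

lemma aeval_eq_zero_of_vanish {ι : Type*} (p : ℕ) [Fact p.Prime] [CharP L p]
    (φ : MvPolynomial ι ℤ) (a : ι → L) (w : ι → ℕ) (m : ℕ)
    (hφ : IsWeightedHomogeneous w φ m) (hm : m ≠ 0)
    (h0 : ∀ i ∈ φ.vars, w i ≠ 0 → a i = 0)
    (hnn : ∀ i ∈ φ.vars, w i = 0 → (0 : WithTop ℤ) ≤ D.v (a i)) :
    MvPolynomial.aeval a φ = 0 := by
  classical
  apply (D.v_top _).1
  have hall : ∀ N : ℕ, ((N : ℤ) : WithTop ℤ) ≤ (1 : ℕ) • D.v (MvPolynomial.aeval a φ) := by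
    intro N
    apply v_aeval_le D p φ a (fun i => if w i = 0 then 0 else (N : ℤ)) _ 1 one_ne_zero
    · intro i hi
      by_cases hw : w i = 0
      · rw [if_pos hw, one_smul]
        exact_mod_cast hnn i hi hw
      · rw [if_neg hw, h0 i hi hw, v_zero, nsmul_top one_ne_zero]
        exact le_top
    · intro d hd
      have hwd := hφ (MvPolynomial.mem_support_iff.1 hd)
      have hex : ∃ i ∈ d.support, w i ≠ 0 := by
        by_contra hcon
        push_neg at hcon
        apply hm
        rw [← hwd, Finsupp.weight_apply, Finsupp.sum]
        exact Finset.sum_eq_zero fun i hi => by rw [hcon i hi, smul_zero]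
      obtain ⟨i₀, hi₀, hw₀⟩ := hex
      rw [Finsupp.sum]
      have hterm : (N : ℤ) ≤ (d i₀ : ℤ) * (if w i₀ = 0 then 0 else (N : ℤ)) := by
        rw [if_neg hw₀]
        have h1 : 1 ≤ (d i₀ : ℤ) := by
          exact_mod_cast Nat.one_le_iff_ne_zero.2 (Finsupp.mem_support_iff.1 hi₀)
        nlinarith [Int.ofNat_nonneg N]
      refine le_trans hterm (Finset.single_le_sum (f := fun i => (d i : ℤ) * (if w i = 0 then 0 else (N:ℤ))) (fun i _ => ?_) hi₀)
      have : (0:ℤ) ≤ (if w i = 0 then 0 else (N:ℤ)) := by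
        split_ifs
        · exact le_refl 0
        · exact_mod_cast Nat.zero_le N
      exact mul_nonneg (by exact_mod_cast Nat.zero_le (d i)) this
  have := eq_top_of_forall_nat_le hall
  rwa [one_smul] at this


section D2
variable {L : Type} [Field L] (D : DVField L)
variable {p : ℕ} [Fact p.Prime] [hcp : CharP L p]

open MvPolynomial

lemma wadd_bound (K : ℕ) (hK : K ≠ 0) (c : ℤ) (x y : WittVector p L)
    (hx : ∀ j : ℕ, ((c * (p ^ j : ℕ) : ℤ) : WithTop ℤ) ≤ K • D.v (x.coeff j))
    (hy : ∀ j : ℕ, ((c * (p ^ j : ℕ) : ℤ) : WithTop ℤ) ≤ K • D.v (y.coeff j)) (j : ℕ) :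
    ((c * (p ^ j : ℕ) : ℤ) : WithTop ℤ) ≤ K • D.v ((x + y).coeff j) := by
  rw [WittVector.add_coeff]
  simp only [WittVector.peval]
  apply v_aeval_le D p _ _ (fun bj : Fin 2 × ℕ => c * ((p ^ bj.2 : ℕ) : ℤ)) _ K hK
  · rintro ⟨b, j'⟩ _
    fin_cases b
    · simpa [Function.uncurry] using hx j'
    · simpa [Function.uncurry] using hy j'
  · exact hs_of_iwh₂ _ _ _ _ _ c 0 _ _ (iwh_wittAdd p j) (iwh_wittAdd p j)
      (fun i => by push_cast; ring) (le_of_eq (by push_cast; ring))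

lemma wneg_bound (K : ℕ) (hK : K ≠ 0) (c : ℤ) (x : WittVector p L)
    (hx : ∀ j : ℕ, ((c * (p ^ j : ℕ) : ℤ) : WithTop ℤ) ≤ K • D.v (x.coeff j)) (j : ℕ) :
    ((c * (p ^ j : ℕ) : ℤ) : WithTop ℤ) ≤ K • D.v ((-x).coeff j) := by
  rw [WittVector.neg_coeff]
  simp only [WittVector.peval]
  apply v_aeval_le D p _ _ (fun bj : Fin 1 × ℕ => c * ((p ^ bj.2 : ℕ) : ℤ)) _ K hK
  · rintro ⟨b, j'⟩ _
    fin_cases b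
    · simpa [Function.uncurry] using hx j'
  · exact hs_of_iwh₂ _ _ _ _ _ c 0 _ _ (iwh_wittNeg p j) (iwh_wittNeg p j)
      (fun i => by push_cast; ring) (le_of_eq (by push_cast; ring))

lemma wmul_bound (K : ℕ) (hK : K ≠ 0) (c₀ c₁ : ℤ) (x y : WittVector p L)
    (hx : ∀ j : ℕ, ((c₀ * (p ^ j : ℕ) : ℤ) : WithTop ℤ) ≤ K • D.v (x.coeff j))
    (hy : ∀ j : ℕ, ((c₁ * (p ^ j : ℕ) : ℤ) : WithTop ℤ) ≤ K • D.v (y.coeff j)) (j : ℕ) :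
    (((c₀ + c₁) * (p ^ j : ℕ) : ℤ) : WithTop ℤ) ≤ K • D.v ((x * y).coeff j) := by
  rw [WittVector.mul_coeff]
  simp only [WittVector.peval]
  apply v_aeval_le D p _ _
    (fun bj : Fin 2 × ℕ => (if bj.1 = 0 then c₀ else c₁) * ((p ^ bj.2 : ℕ) : ℤ)) _ K hK
  · rintro ⟨b, j'⟩ _
    fin_cases b
    · simpa [Function.uncurry] using hx j'
    · simpa [Function.uncurry] using hy j'
  · apply hs_of_iwh₂ _ _ _ _ _ c₀ c₁ _ _ (iwh_wittMul p j 0) (iwh_wittMul p j 1)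
      ?_ (le_of_eq (by push_cast; ring))
    rintro ⟨b, j'⟩
    fin_cases b <;> simp

end D2

section D2b
open MvPolynomial
variable {L : Type} [Field L] {p : ℕ} [Fact p.Prime] [CharP L p]

lemma wadd_prefix (D : DVField L) (k : ℕ) (x y : WittVector p L)
    (hx : ∀ j < k, x.coeff j = 0) (hy : ∀ j < k, y.coeff j = 0) :
    ∀ j < k, (x + y).coeff j = 0 := by
  intro j hj
  rw [WittVector.add_coeff]
  simp only [WittVector.peval]
  apply aeval_eq_zero_of_vanish D p _ _ (fun bj : Fin 2 × ℕ => p ^ bj.2) (p ^ j)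
      (iwh_wittAdd p j) (pow_ne_zero _ (Nat.Prime.ne_zero Fact.out))
  · rintro ⟨b, j'⟩ hvars _
    have hmem := WittVector.wittAdd_vars p j hvars
    simp only [Finset.mem_product, Finset.mem_range] at hmem
    have hj' : j' < k := by omega
    fin_cases b
    · simpa [Function.uncurry] using hx j' hj'
    · simpa [Function.uncurry] using hy j' hj'
  · rintro ⟨b, j'⟩ _ habs
    exact absurd habs (pow_ne_zero _ (Nat.Prime.ne_zero Fact.out))

lemma wneg_prefix (D : DVField L) (k : ℕ) (x : WittVector p L)
    (hx : ∀ j < k, x.coeff j = 0) :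
    ∀ j < k, (-x).coeff j = 0 := by
  intro j hj
  rw [WittVector.neg_coeff]
  simp only [WittVector.peval]
  apply aeval_eq_zero_of_vanish D p _ _ (fun bj : Fin 1 × ℕ => p ^ bj.2) (p ^ j)
      (iwh_wittNeg p j) (pow_ne_zero _ (Nat.Prime.ne_zero Fact.out))
  · rintro ⟨b, j'⟩ hvars _
    have hmem := WittVector.wittNeg_vars p j hvars
    simp only [Finset.mem_product, Finset.mem_range] at hmem
    have hj' : j' < k := by omega
    fin_cases b
    · simpa [Function.uncurry] using hx j' hj'
  · rintro ⟨b, j'⟩ _ habs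
    exact absurd habs (pow_ne_zero _ (Nat.Prime.ne_zero Fact.out))

lemma wmul_prefix (D : DVField L) (k : ℕ) (x y : WittVector p L)
    (hx : ∀ j : ℕ, (0 : WithTop ℤ) ≤ D.v (x.coeff j))
    (hy : ∀ j < k, y.coeff j = 0) :
    ∀ j < k, (x * y).coeff j = 0 := by
  intro j hj
  rw [WittVector.mul_coeff]
  simp only [WittVector.peval]
  apply aeval_eq_zero_of_vanish D p _ _
    (fun bj : Fin 2 × ℕ => (if bj.1 = 1 then 1 else 0) * p ^ bj.2) (p ^ j)
    (iwh_wittMul p j 1) (pow_ne_zero _ (Nat.Prime.ne_zero Fact.out))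
  · rintro ⟨b, j'⟩ hvars hw
    have hmem := WittVector.wittMul_vars p j hvars
    simp only [Finset.mem_product, Finset.mem_range] at hmem
    have hj' : j' < k := by omega
    fin_cases b
    · simp at hw
    · simpa [Function.uncurry] using hy j' hj'
  · rintro ⟨b, j'⟩ _ hw
    fin_cases b
    · simpa [Function.uncurry] using hx j'
    · simp [pow_ne_zero _ (Nat.Prime.ne_zero (Fact.out : p.Prime))] at hw
      exact absurd hw.1 (Nat.Prime.ne_zero Fact.out)

end D2b

lemma hp_ne {p : ℕ} [Fact p.Prime] (k : ℕ) : (p ^ k : ℕ) ≠ 0 :=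
  pow_ne_zero _ (Nat.Prime.ne_zero (Fact.out : p.Prime))

section D3
open TruncatedWittVector
variable {L : Type} [Field L] {p : ℕ} [Fact p.Prime] [CharP L p] {n : ℕ}

lemma tr_add_coeff (x y : TruncatedWittVector p n L) (i : Fin n) :
    (x + y).coeff i = (x.out + y.out).coeff (i : ℕ) := by
  have h : x + y = WittVector.truncateFun n (x.out + y.out) := by
    rw [WittVector.truncateFun_add, truncateFun_out, truncateFun_out]
  rw [h, WittVector.coeff_truncateFun]

lemma tr_mul_coeff (x y : TruncatedWittVector p n L) (i : Fin n) :
    (x * y).coeff i = (x.out * y.out).coeff (i : ℕ) := by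
  have h : x * y = WittVector.truncateFun n (x.out * y.out) := by
    rw [WittVector.truncateFun_mul, truncateFun_out, truncateFun_out]
  rw [h, WittVector.coeff_truncateFun]

lemma tr_neg_coeff (x : TruncatedWittVector p n L) (i : Fin n) :
    (-x).coeff i = (-x.out).coeff (i : ℕ) := by
  have h : -x = WittVector.truncateFun n (-x.out) := by
    rw [WittVector.truncateFun_neg, truncateFun_out]
  rw [h, WittVector.coeff_truncateFun]

lemma out_coeff_lt (x : TruncatedWittVector p n L) (j : ℕ) (hj : j < n) :
    x.out.coeff j = x.coeff ⟨j, hj⟩ :=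
  TruncatedWittVector.coeff_out x ⟨j, hj⟩

lemma out_coeff_ge (x : TruncatedWittVector p n L) (j : ℕ) (hj : n ≤ j) :
    x.out.coeff j = 0 := by
  show (if h : j < n then x.coeff ⟨j, h⟩ else 0) = 0
  rw [dif_neg (not_lt.2 hj)]

variable (D : DVField L)

lemma filLog_out_bound {r : ℕ} (hn : 1 ≤ n) {x : TruncatedWittVector p n L}
    (hx : x ∈ D.filLog p r n) (j : ℕ) :
    ((-(r : ℤ) * ((p ^ j : ℕ) : ℤ) : ℤ) : WithTop ℤ) ≤ (p ^ (n-1) : ℕ) • D.v (x.out.coeff j) := by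
  rcases lt_or_ge j n with hj | hj
  · have h := hx ⟨j, hj⟩
    rw [out_coeff_lt x j hj]
    have h2 := nsmul_le_nsmul_right h (p ^ j)
    rw [coe_nsmul] at h2
    have eL : ((p ^ j : ℕ) • (-(r : ℤ))) = -(r : ℤ) * ((p ^ j : ℕ) : ℤ) := by
      rw [nsmul_eq_mul]; ring
    have eR : (p ^ j : ℕ) • ((p : ℕ) ^ (n - 1 - j) • D.v (x.coeff ⟨j, hj⟩))
        = (p ^ (n-1) : ℕ) • D.v (x.coeff ⟨j, hj⟩) := by
      rw [← mul_nsmul', ← pow_add]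
      congr 2
      omega
    rw [eL, eR] at h2
    exact h2
  · rw [out_coeff_ge x j hj, v_zero, nsmul_top (hp_ne (n-1))]
    exact le_top

lemma filLog_of_bound {r : ℕ} (hn : 1 ≤ n) {x : TruncatedWittVector p n L}
    (hx : ∀ i : Fin n, ((-(r : ℤ) * ((p ^ (i:ℕ) : ℕ) : ℤ) : ℤ) : WithTop ℤ)
      ≤ (p ^ (n-1) : ℕ) • D.v (x.coeff i)) :
    x ∈ D.filLog p r n := by
  intro i
  have h := hx i
  rw [← nsmul_le_nsmul_iff (k := p ^ (i:ℕ)) (hp_ne _)]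
  have eL : (p ^ (i:ℕ) : ℕ) • ((-(r : ℤ) : ℤ) : WithTop ℤ)
      = ((-(r : ℤ) * ((p ^ (i:ℕ) : ℕ) : ℤ) : ℤ) : WithTop ℤ) := by
    rw [coe_nsmul, nsmul_eq_mul]
    congr 1
    ring
  have eR : (p ^ (i:ℕ) : ℕ) • ((p : ℕ) ^ (n - 1 - (i:ℕ)) • D.v (x.coeff i))
      = (p ^ (n-1) : ℕ) • D.v (x.coeff i) := by
    rw [← mul_nsmul', ← pow_add]
    congr 2
    have := i.isLt
    omega
  rw [eL, eR]
  exact h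

lemma WO_out_bound {x : TruncatedWittVector p n L} (hx : x ∈ D.WO p n) (j : ℕ) :
    (0 : WithTop ℤ) ≤ D.v (x.out.coeff j) := by
  rcases lt_or_ge j n with hj | hj
  · rw [out_coeff_lt x j hj]; exact hx ⟨j, hj⟩
  · rw [out_coeff_ge x j hj, v_zero]; exact le_top

lemma WO_out_bound' (K : ℕ) {x : TruncatedWittVector p n L} (hx : x ∈ D.WO p n) (j : ℕ) :
    (((0:ℤ) * ((p ^ j : ℕ) : ℤ) : ℤ) : WithTop ℤ) ≤ K • D.v (x.out.coeff j) := by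
  have h0 := WO_out_bound D hx j
  have := nsmul_le_nsmul_right h0 K
  rw [smul_zero] at this
  simpa using this

end D3

section D4
open TruncatedWittVector
variable {L : Type} [Field L] {p : ℕ} [Fact p.Prime] [CharP L p] (D : DVField L) {n : ℕ}

lemma filLog_mono {r r' : ℕ} (h : r ≤ r') {x : TruncatedWittVector p n L}
    (hx : x ∈ D.filLog p r n) : x ∈ D.filLog p r' n := by
  intro i
  refine le_trans ?_ (hx i)
  rw [WithTop.coe_le_coe]
  omega

lemma filLog_add (hn : 1 ≤ n) {r : ℕ} {x y : TruncatedWittVector p n L}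
    (hx : x ∈ D.filLog p r n) (hy : y ∈ D.filLog p r n) : x + y ∈ D.filLog p r n := by
  apply filLog_of_bound D hn
  intro i
  rw [tr_add_coeff]
  exact wadd_bound D _ (hp_ne _) (-(r:ℤ)) _ _
    (filLog_out_bound D hn hx) (filLog_out_bound D hn hy) (i : ℕ)

lemma filLog_neg (hn : 1 ≤ n) {r : ℕ} {x : TruncatedWittVector p n L}
    (hx : x ∈ D.filLog p r n) : -x ∈ D.filLog p r n := by
  apply filLog_of_bound D hn
  intro i
  rw [tr_neg_coeff]
  exact wneg_bound D _ (hp_ne _) (-(r:ℤ)) _ (filLog_out_bound D hn hx) (i : ℕ)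

lemma filLog_mul_WO (hn : 1 ≤ n) {r : ℕ} {a x : TruncatedWittVector p n L}
    (ha : a ∈ D.WO p n) (hx : x ∈ D.filLog p r n) : a * x ∈ D.filLog p r n := by
  apply filLog_of_bound D hn
  intro i
  rw [tr_mul_coeff]
  have h := wmul_bound D _ (hp_ne (n-1)) 0 (-(r:ℤ)) a.out x.out
    (WO_out_bound' D _ ha) (filLog_out_bound D hn hx) (i : ℕ)
  rwa [zero_add] at h

lemma WO_mem_filLog {r : ℕ} {x : TruncatedWittVector p n L}
    (hx : x ∈ D.WO p n) : x ∈ D.filLog p r n := by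
  intro i
  have h := nsmul_le_nsmul_right (hx i) (p ^ (n - 1 - (i:ℕ)))
  rw [smul_zero] at h
  refine le_trans ?_ h
  rw [← WithTop.coe_zero, WithTop.coe_le_coe]
  omega

lemma filLog_zero_subset_WO (hn : 1 ≤ n) {x : TruncatedWittVector p n L}
    (hx : x ∈ D.filLog p 0 n) : x ∈ D.WO p n := by
  intro i
  have h := hx i
  rw [← nsmul_le_nsmul_iff (k := p ^ (n - 1 - (i:ℕ))) (hp_ne _), smul_zero]
  refine le_trans (le_of_eq ?_) h
  norm_num

lemma WO_add (hn : 1 ≤ n) {x y : TruncatedWittVector p n L}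
    (hx : x ∈ D.WO p n) (hy : y ∈ D.WO p n) : x + y ∈ D.WO p n :=
  filLog_zero_subset_WO D hn (filLog_add D hn (WO_mem_filLog D hx) (WO_mem_filLog D hy))

lemma WO_neg (hn : 1 ≤ n) {x : TruncatedWittVector p n L}
    (hx : x ∈ D.WO p n) : -x ∈ D.WO p n :=
  filLog_zero_subset_WO D hn (filLog_neg D hn (WO_mem_filLog D hx))

lemma WO_mul (hn : 1 ≤ n) {x y : TruncatedWittVector p n L}
    (hx : x ∈ D.WO p n) (hy : y ∈ D.WO p n) : x * y ∈ D.WO p n :=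
  filLog_zero_subset_WO D hn (filLog_mul_WO D hn hx (WO_mem_filLog D hy))

lemma WO_zero : (0 : TruncatedWittVector p n L) ∈ D.WO p n := by
  intro i
  rw [TruncatedWittVector.coeff_zero, v_zero]
  exact le_top

lemma WO_natCast (m : ℕ) : ((m : TruncatedWittVector p n L)) ∈ D.WO p n := by
  intro i
  have h : (m : TruncatedWittVector p n L) = WittVector.truncateFun n ((m : WittVector p L)) :=
    (WittVector.truncateFun_natCast _ _).symm
  rw [h, WittVector.coeff_truncateFun]
  have hmap : ((m : WittVector p L)) = WittVector.map (Int.castRingHom L) ((m : WittVector p ℤ)) := by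
    rw [map_natCast]
  rw [hmap, WittVector.map_coeff]
  exact v_intCast_nonneg D p _

lemma WO_nsmul (hn : 1 ≤ n) (m : ℕ) {x : TruncatedWittVector p n L}
    (hx : x ∈ D.WO p n) : m • x ∈ D.WO p n := by
  rw [nsmul_eq_mul]
  exact WO_mul D hn (WO_natCast D m) hx

lemma WO_sum (hn : 1 ≤ n) {ι : Type*} (s : Finset ι) (g : ι → TruncatedWittVector p n L)
    (hg : ∀ i ∈ s, g i ∈ D.WO p n) : (∑ i ∈ s, g i) ∈ D.WO p n := by
  classical
  induction s using Finset.cons_induction with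
  | empty => simpa using WO_zero D
  | cons a s ha ih =>
    rw [Finset.sum_cons]
    exact WO_add D hn (hg a (Finset.mem_cons_self a s))
      (ih fun i hi => hg i (Finset.mem_cons_of_mem hi))

/-- elements with vanishing prefix of length `k` and in `filLog r'` -/
def VS (r' k : ℕ) : Set (TruncatedWittVector p n L) :=
  {x | (∀ i : Fin n, (i : ℕ) < k → x.coeff i = 0) ∧ x ∈ D.filLog p r' n}

lemma out_prefix {k : ℕ} {x : TruncatedWittVector p n L}
    (hx : ∀ i : Fin n, (i : ℕ) < k → x.coeff i = 0) :
    ∀ j < k, x.out.coeff j = 0 := by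
  intro j hj
  rcases lt_or_ge j n with h | h
  · rw [out_coeff_lt x j h]; exact hx ⟨j, h⟩ hj
  · exact out_coeff_ge x j h

lemma VS_add (hn : 1 ≤ n) {r' k : ℕ} {x y : TruncatedWittVector p n L}
    (hx : x ∈ VS D r' k) (hy : y ∈ VS D r' k) : x + y ∈ VS D r' k := by
  constructor
  · intro i hi
    rw [tr_add_coeff]
    exact wadd_prefix D k x.out y.out (out_prefix hx.1) (out_prefix hy.1) (i:ℕ) hi
  · exact filLog_add D hn hx.2 hy.2

lemma VS_neg (hn : 1 ≤ n) {r' k : ℕ} {x : TruncatedWittVector p n L}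
    (hx : x ∈ VS D r' k) : -x ∈ VS D r' k := by
  constructor
  · intro i hi
    rw [tr_neg_coeff]
    exact wneg_prefix D k x.out (out_prefix hx.1) (i:ℕ) hi
  · exact filLog_neg D hn hx.2

lemma VS_mul (hn : 1 ≤ n) {r' k : ℕ} {a x : TruncatedWittVector p n L}
    (ha : a ∈ D.WO p n) (hx : x ∈ VS D r' k) : a * x ∈ VS D r' k := by
  constructor
  · intro i hi
    rw [tr_mul_coeff]
    exact wmul_prefix D k a.out x.out (WO_out_bound D ha) (out_prefix hx.1) (i:ℕ) hi
  · exact filLog_mul_WO D hn ha hx.2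

lemma wVit_mem_VS {m : ℕ} (hm : m ≤ n) {r' : ℕ} {b : TruncatedWittVector p m L}
    (hb : b ∈ D.filLog p r' m) : (wVit b : TruncatedWittVector p n L) ∈ VS D r' (n - m) := by
  constructor
  · intro i hi
    show (TruncatedWittVector.mk p _).coeff i = 0
    rw [TruncatedWittVector.coeff_mk]
    rw [dif_neg]
    intro hcon
    omega
  · intro i
    show _ ≤ _ • D.v ((TruncatedWittVector.mk p _).coeff i)
    rw [TruncatedWittVector.coeff_mk]
    by_cases hc : n - m ≤ (i : ℕ) ∧ (i : ℕ) - (n - m) < m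
    · rw [dif_pos hc]
      have h := hb ⟨(i : ℕ) - (n - m), hc.2⟩
      have he : m - 1 - ((i : ℕ) - (n - m)) = n - 1 - (i : ℕ) := by
        have := i.isLt
        omega
      rw [he] at h
      exact h
    · rw [dif_neg hc, v_zero, nsmul_top (hp_ne _)]
      exact le_top

lemma VS_eq_wVit {m : ℕ} (hm : m ≤ n) {r' : ℕ} {x : TruncatedWittVector p n L}
    (hx : x ∈ VS D r' (n - m)) :
    ∃ b ∈ D.filLog p r' m, x = (wVit b : TruncatedWittVector p n L) := by
  refine ⟨TruncatedWittVector.mk p (fun j : Fin m => x.coeff ⟨(j : ℕ) + (n - m), by omega⟩), ?_, ?_⟩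
  · intro j
    rw [TruncatedWittVector.coeff_mk]
    have h := hx.2 ⟨(j : ℕ) + (n - m), by omega⟩
    have he : n - 1 - ((j : ℕ) + (n - m)) = m - 1 - (j : ℕ) := by
      have := j.isLt
      omega
    rw [he] at h
    exact h
  · apply TruncatedWittVector.ext
    intro i
    show x.coeff i = (TruncatedWittVector.mk p _).coeff i
    rw [TruncatedWittVector.coeff_mk]
    by_cases hc : n - m ≤ (i : ℕ) ∧ (i : ℕ) - (n - m) < m
    · rw [dif_pos hc, TruncatedWittVector.coeff_mk]
      congr 1
      apply Fin.ext
      show (i : ℕ) = (i : ℕ) - (n - m) + (n - m)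
      omega
    · rw [dif_neg hc]
      apply hx.1
      have := i.isLt
      omega

lemma wVit_zero {m : ℕ} : (wVit (0 : TruncatedWittVector p m L) : TruncatedWittVector p n L) = 0 := by
  apply TruncatedWittVector.ext
  intro i
  show (TruncatedWittVector.mk p _).coeff i = _
  rw [TruncatedWittVector.coeff_mk, TruncatedWittVector.coeff_zero]
  split_ifs with h
  · rw [TruncatedWittVector.coeff_zero]
  · rfl

end D4

section D5
open TruncatedWittVector
variable {L : Type} [Field L] {p : ℕ} [Fact p.Prime] [CharP L p] (D : DVField L) {n : ℕ}

lemma mem_filKM_pos {r : ℕ} (hr : r ≠ 0) (x : TruncatedWittVector p n L) :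
    x ∈ D.filKM p r n ↔ ∃ a ∈ D.filLog p (r-1) n,
      ∃ b ∈ D.filLog p r (min (padicValNat p r) n), x = a + wVit b := by
  rw [DVField.filKM, if_neg hr]
  rfl

lemma mem_filKM_zero (x : TruncatedWittVector p n L) :
    x ∈ D.filKM p 0 n ↔ x ∈ D.WO p n := by
  rw [DVField.filKM, if_pos rfl]

lemma filKM_subset_filLog (hn : 1 ≤ n) {r : ℕ} {x : TruncatedWittVector p n L}
    (hx : x ∈ D.filKM p r n) : x ∈ D.filLog p r n := by
  by_cases hr : r = 0
  · subst hr
    exact WO_mem_filLog D ((mem_filKM_zero D x).1 hx)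
  · obtain ⟨a, ha, b, hb, rfl⟩ := (mem_filKM_pos D hr _).1 hx
    exact filLog_add D hn (filLog_mono D (Nat.sub_le r 1) ha)
      (wVit_mem_VS D (min_le_right _ n) hb).2

lemma filKM_zero_mem (hn : 1 ≤ n) (r : ℕ) : (0 : TruncatedWittVector p n L) ∈ D.filKM p r n := by
  by_cases hr : r = 0
  · subst hr
    exact (mem_filKM_zero D _).2 (WO_zero D)
  · refine (mem_filKM_pos D hr _).2 ⟨0, WO_mem_filLog D (WO_zero D), 0,
      WO_mem_filLog D (WO_zero D), ?_⟩
    rw [wVit_zero, add_zero]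

lemma WO_subset_filKM (hn : 1 ≤ n) (r : ℕ) {x : TruncatedWittVector p n L}
    (hx : x ∈ D.WO p n) : x ∈ D.filKM p r n := by
  by_cases hr : r = 0
  · subst hr
    exact (mem_filKM_zero D _).2 hx
  · refine (mem_filKM_pos D hr _).2 ⟨x, WO_mem_filLog D hx, 0,
      WO_mem_filLog D (WO_zero D), ?_⟩
    rw [wVit_zero, add_zero]

lemma filKM_add (hn : 1 ≤ n) {r : ℕ} {x y : TruncatedWittVector p n L}
    (hx : x ∈ D.filKM p r n) (hy : y ∈ D.filKM p r n) : x + y ∈ D.filKM p r n := by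
  by_cases hr : r = 0
  · subst hr
    rw [mem_filKM_zero] at *
    exact WO_add D hn hx hy
  · obtain ⟨a, ha, b, hb, rfl⟩ := (mem_filKM_pos D hr _).1 hx
    obtain ⟨a', ha', b', hb', rfl⟩ := (mem_filKM_pos D hr _).1 hy
    have hvs := VS_add D hn (wVit_mem_VS D (min_le_right (padicValNat p r) n) hb)
      (wVit_mem_VS D (min_le_right (padicValNat p r) n) hb')
    obtain ⟨b'', hb'', heq⟩ := VS_eq_wVit D (min_le_right (padicValNat p r) n) hvs
    refine (mem_filKM_pos D hr _).2 ⟨a + a', filLog_add D hn ha ha', b'', hb'', ?_⟩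
    rw [← heq]
    ring

lemma filKM_neg (hn : 1 ≤ n) {r : ℕ} {x : TruncatedWittVector p n L}
    (hx : x ∈ D.filKM p r n) : -x ∈ D.filKM p r n := by
  by_cases hr : r = 0
  · subst hr
    rw [mem_filKM_zero] at *
    exact WO_neg D hn hx
  · obtain ⟨a, ha, b, hb, rfl⟩ := (mem_filKM_pos D hr _).1 hx
    have hvs := VS_neg D hn (wVit_mem_VS D (min_le_right (padicValNat p r) n) hb)
    obtain ⟨b'', hb'', heq⟩ := VS_eq_wVit D (min_le_right (padicValNat p r) n) hvs
    refine (mem_filKM_pos D hr _).2 ⟨-a, filLog_neg D hn ha, b'', hb'', ?_⟩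
    rw [← heq]
    ring

lemma filKM_mul (hn : 1 ≤ n) {r : ℕ} {a₀ x : TruncatedWittVector p n L}
    (ha₀ : a₀ ∈ D.WO p n) (hx : x ∈ D.filKM p r n) : a₀ * x ∈ D.filKM p r n := by
  by_cases hr : r = 0
  · subst hr
    rw [mem_filKM_zero] at *
    exact WO_mul D hn ha₀ hx
  · obtain ⟨a, ha, b, hb, rfl⟩ := (mem_filKM_pos D hr _).1 hx
    have hvs := VS_mul D hn ha₀ (wVit_mem_VS D (min_le_right (padicValNat p r) n) hb)
    obtain ⟨b'', hb'', heq⟩ := VS_eq_wVit D (min_le_right (padicValNat p r) n) hvs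
    refine (mem_filKM_pos D hr _).2 ⟨a₀ * a, filLog_mul_WO D hn ha₀ ha, b'', hb'', ?_⟩
    rw [← heq]
    ring

lemma wT_mul_WO (hn : 1 ≤ n) {r' : ℕ} {x : TruncatedWittVector p n L}
    (hx : x ∈ D.filLog p r' n) : wT p n (D.z ^ r') * x ∈ D.WO p n := by
  apply filLog_zero_subset_WO D hn
  apply filLog_of_bound D hn
  intro i
  rw [tr_mul_coeff]
  have hb : ∀ j : ℕ, (((r' : ℤ) * ((p ^ j : ℕ) : ℤ) : ℤ) : WithTop ℤ)
      ≤ (p ^ (n-1) : ℕ) • D.v ((wT p n (D.z ^ r')).out.coeff j) := by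
    intro j
    rcases lt_or_ge j n with hj | hj
    · rw [out_coeff_lt _ j hj]
      show _ ≤ _ • D.v ((TruncatedWittVector.mk p _).coeff _)
      rw [TruncatedWittVector.coeff_mk]
      rcases Nat.eq_zero_or_pos j with rfl | hjpos
      · rw [if_pos rfl]
        have hv : D.v (D.z ^ r') = ((r' : ℤ) : WithTop ℤ) := by
          rw [v_pow, D.v_z]
          rw [show (1 : WithTop ℤ) = ((1:ℤ) : WithTop ℤ) from rfl, coe_nsmul]
          congr 1
          simp
        rw [hv, coe_nsmul, WithTop.coe_le_coe, nsmul_eq_mul]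
        have h1 : 1 ≤ (p ^ (n-1) : ℕ) := Nat.one_le_iff_ne_zero.2 (hp_ne _)
        have h2 : ((p : ℕ) ^ (0:ℕ) : ℕ) = 1 := pow_zero p
        rw [h2]
        push_cast
        nlinarith [Int.ofNat_nonneg r', Int.ofNat_nonneg (p ^ (n-1))]
      · have hne : ((⟨j, hj⟩ : Fin n) : ℕ) ≠ 0 := by
          simp only [Fin.val_mk]
          omega
        rw [if_neg hne, v_zero, nsmul_top (hp_ne _)]
        exact le_top
    · rw [out_coeff_ge _ j hj, v_zero, nsmul_top (hp_ne _)]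
      exact le_top
  have h := wmul_bound D _ (hp_ne (n-1)) (r' : ℤ) (-(r' : ℤ)) (wT p n (D.z ^ r')).out x.out
      hb (filLog_out_bound D hn hx) (i:ℕ)
  have he : (((r' : ℤ) + -(r' : ℤ)) * ((p ^ (i:ℕ) : ℕ) : ℤ)) = (-((0:ℕ) : ℤ) * ((p ^ (i:ℕ) : ℕ) : ℤ)) := by
    push_cast
    ring
  rw [he] at h
  exact h

/-! ### FilP closure -/

lemma FilP_zero (hn : 1 ≤ n) (r : ℕ) : (0 : TruncatedWittVector p n L) ∈ D.FilP p r n := by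
  refine ⟨fun _ => 0, fun s => filKM_zero_mem D hn _, ?_⟩
  simp

lemma FilP_add (hn : 1 ≤ n) {r : ℕ} {x y : TruncatedWittVector p n L}
    (hx : x ∈ D.FilP p r n) (hy : y ∈ D.FilP p r n) : x + y ∈ D.FilP p r n := by
  obtain ⟨f, hf, rfl⟩ := hx
  obtain ⟨g, hg, rfl⟩ := hy
  refine ⟨fun s => f s + g s, fun s => filKM_add D hn (hf s) (hg s), ?_⟩
  rw [← Finset.sum_add_distrib]
  exact Finset.sum_congr rfl fun s _ => (smul_add _ _ _).symm

lemma FilP_neg (hn : 1 ≤ n) {r : ℕ} {x : TruncatedWittVector p n L}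
    (hx : x ∈ D.FilP p r n) : -x ∈ D.FilP p r n := by
  obtain ⟨f, hf, rfl⟩ := hx
  refine ⟨fun s => -(f s), fun s => filKM_neg D hn (hf s), ?_⟩
  rw [← Finset.sum_neg_distrib]
  exact Finset.sum_congr rfl fun s _ => (smul_neg _ _).symm

lemma FilP_mul (hn : 1 ≤ n) {r : ℕ} {a x : TruncatedWittVector p n L}
    (ha : a ∈ D.WO p n) (hx : x ∈ D.FilP p r n) : a * x ∈ D.FilP p r n := by
  obtain ⟨f, hf, rfl⟩ := hx
  refine ⟨fun s => a * f s, fun s => filKM_mul D hn ha (hf s), ?_⟩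
  rw [Finset.mul_sum]
  exact Finset.sum_congr rfl fun s _ => (mul_smul_comm _ _ _)

lemma WO_subset_FilP (hn : 1 ≤ n) (r : ℕ) {x : TruncatedWittVector p n L}
    (hx : x ∈ D.WO p n) : x ∈ D.FilP p r n := by
  refine ⟨fun s => if (s : ℕ) = 0 then x else 0, fun s => ?_, ?_⟩
  · by_cases h0 : (s : ℕ) = 0
    · simpa only [if_pos h0] using WO_subset_filKM D hn (r * p ^ (s:ℕ)) hx
    · simpa only [if_neg h0] using filKM_zero_mem D hn (r * p ^ (s:ℕ))
  · rw [Finset.sum_eq_single (⟨0, hn⟩ : Fin n)]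
    · simp
    · intro b _ hb
      have hb0 : (b : ℕ) ≠ 0 := fun hc => hb (Fin.ext hc)
      simp only [if_neg hb0, smul_zero]
    · intro habs
      exact absurd (Finset.mem_univ _) habs

lemma FilP_teich (hn : 1 ≤ n) {r : ℕ} {x : TruncatedWittVector p n L}
    (hx : x ∈ D.FilP p r n) :
    wT p n (D.z ^ (r * p ^ (n - 1))) * x ∈ D.WO p n := by
  obtain ⟨f, hf, rfl⟩ := hx
  rw [Finset.mul_sum]
  apply WO_sum D hn
  intro s _
  rw [mul_smul_comm]
  apply WO_nsmul D hn
  apply wT_mul_WO D hn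
  apply filLog_mono D (r' := r * p ^ (n-1)) ?_ (filKM_subset_filLog D hn (hf s))
  have hs : (s : ℕ) ≤ n - 1 := by
    have := s.isLt
    omega
  have := Nat.pow_le_pow_right (Nat.Prime.pos (Fact.out : p.Prime)) hs
  exact Nat.mul_le_mul_left r this

end D5

end S6Aux

/-- (Weight-zero module structure of the `p`-saturated filtration.)
For all `r ≥ 0` and `n ≥ 1`: `Fil^p_r Wₙ(L)` is a `Wₙ(O)`-submodule of `Wₙ(L)`, and
`Wₙ(O) ⊆ Fil^p_r Wₙ(L) ⊆ [z]^{-r·p^{n-1}} · Wₙ(O)`, equivalently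
`[z^{r·p^{n-1}}] · Fil^p_r Wₙ(L) ⊆ Wₙ(O)`. -/
theorem statement6 (p : ℕ) [Fact p.Prime] (L : Type) [Field L] [CharP L p]
    (D : DVField L) (r n : ℕ) (hn : 1 ≤ n) :
    ((0 : TruncatedWittVector p n L) ∈ D.FilP p r n ∧
      (∀ x ∈ D.FilP p r n, ∀ y ∈ D.FilP p r n, x + y ∈ D.FilP p r n) ∧
      (∀ x ∈ D.FilP p r n, -x ∈ D.FilP p r n) ∧
      (∀ a ∈ D.WO p n, ∀ x ∈ D.FilP p r n, a * x ∈ D.FilP p r n)) ∧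
    D.WO p n ⊆ D.FilP p r n ∧
    (∀ x ∈ D.FilP p r n, wT p n (D.z ^ (r * p ^ (n - 1))) * x ∈ D.WO p n) := by
  refine ⟨⟨S6Aux.FilP_zero D hn r, ?_, ?_, ?_⟩, ?_, ?_⟩
  · intro x hx y hy
    exact S6Aux.FilP_add D hn hx hy
  · intro x hx
    exact S6Aux.FilP_neg D hn hx
  · intro a ha x hx
    exact S6Aux.FilP_mul D hn ha hx
  · intro x hx
    exact S6Aux.WO_subset_FilP D hn r hx
  · intro x hx
    exact S6Aux.FilP_teich D hn hx
end
end
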